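/- arXiv:2110.00132 — 4 statements merged into one kernel-verified Lean document; each statement's English description precedes it below -/
import Mathlib

section
/- Let Λ ⊂ ℝ^n be a full-rank lattice and K ⊂ ℝ^n a closed convex body symmetric about the origin. Then vol(K) < (|Λ ∩ K| + 1) · 2^{n−1} · det(Λ). -/
open MeasureTheory

open Set
open scoped ENNReal NNReal Pointwise

open scoped ENNReal NNReal Pointwise

theorem vdc_blichfeldt {E L : Type*} [MeasurableSpace E] {μ : Measure E} {F S : Set E}
    [AddCommGroup L] [Countable L] [AddAction L E] [MeasurableSpace L] [MeasurableVAdd L E]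
    [VAddInvariantMeasure L E μ] (fund : IsAddFundamentalDomain L F μ)
    (hS : NullMeasurableSet S μ) (m : ℕ) (h : (m : ℝ≥0∞) * μ F < μ S) :
    ∃ x : E, (m : ℕ∞) < {l : L | x ∈ l +ᵥ S}.encard := by
  by_contra hc
  push_neg at hc
  -- choose measurable subsets of `(l +ᵥ S) ∩ F` of full measure
  have hns : ∀ l : L, NullMeasurableSet ((l +ᵥ S) ∩ F) μ := fun l =>
    (hS.vadd l).inter fund.nullMeasurableSet
  choose t ht_sub ht_meas ht_eq using fun l : L => (hns l).exists_measurable_subset_ae_eq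
  have key : μ S = ∑' l : L, μ (t l) := by
    rw [fund.measure_eq_tsum S]
    exact tsum_congr fun l => (measure_congr (ht_eq l)).symm
  -- pointwise bound
  have hpt : ∀ x : E, (∑' l : L, (t l).indicator (1 : E → ℝ≥0∞) x)
      ≤ (m : ℝ≥0∞) * (toMeasurable μ F).indicator (1 : E → ℝ≥0∞) x := by
    intro x
    by_cases hx : x ∈ toMeasurable μ F
    · have hsub : {l : L | x ∈ t l} ⊆ {l : L | x ∈ l +ᵥ S} := fun l hl =>
        (ht_sub l hl).1
      have hen : {l : L | x ∈ t l}.encard ≤ (m : ℕ∞) := le_trans (encard_le_encard hsub) (hc x)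
      have hfin : {l : L | x ∈ t l}.Finite := finite_of_encard_le_coe hen
      haveI := hfin.fintype
      have : (∑' l : {l : L | x ∈ t l}, (1 : ℝ≥0∞))
          = ∑' l : L, (t l).indicator (1 : E → ℝ≥0∞) x := by
        refine (tsum_subtype {l : L | x ∈ t l} (fun _ => (1 : ℝ≥0∞))).trans
          (tsum_congr fun l => ?_)
        by_cases hl : x ∈ t l <;>
          simp [Set.indicator_apply, hl, Set.mem_setOf_eq]
      rw [← this, tsum_fintype]
      simp only [Finset.sum_const, Finset.card_univ, nsmul_eq_mul, mul_one]
      rw [Set.indicator_of_mem hx, Pi.one_apply, mul_one]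
      have hcard : {l : L | x ∈ t l}.toFinset.card ≤ m := by
        have := hen
        rw [encard_eq_coe_toFinset_card] at this
        exact_mod_cast this
      calc (Fintype.card {l : L | x ∈ t l} : ℝ≥0∞)
          = ({l : L | x ∈ t l}.toFinset.card : ℝ≥0∞) := by rw [Set.toFinset_card]
        _ ≤ (m : ℝ≥0∞) := by exact_mod_cast hcard
    · have : ∀ l : L, (t l).indicator (1 : E → ℝ≥0∞) x = 0 := by
        intro l
        refine Set.indicator_of_notMem (fun hxl => hx ?_) _
        exact subset_toMeasurable μ F (inter_subset_right (ht_sub l hxl))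
      simp [this, Set.indicator_of_notMem hx]
  have hle : μ S ≤ (m : ℝ≥0∞) * μ F := by
    calc μ S = ∑' l : L, μ (t l) := key
      _ = ∑' l : L, ∫⁻ x, (t l).indicator 1 x ∂μ := by
          refine tsum_congr fun l => ?_
          exact (lintegral_indicator_one (ht_meas l)).symm
      _ = ∫⁻ x, ∑' l : L, (t l).indicator 1 x ∂μ :=
          (lintegral_tsum fun l => ((measurable_one.indicator (ht_meas l)).aemeasurable)).symm
      _ ≤ ∫⁻ x, (m : ℝ≥0∞) * (toMeasurable μ F).indicator 1 x ∂μ := lintegral_mono hpt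
      _ = (m : ℝ≥0∞) * μ (toMeasurable μ F) := by
          rw [lintegral_const_mul _ (measurable_one.indicator (measurableSet_toMeasurable μ F)),
            lintegral_indicator_one (measurableSet_toMeasurable μ F)]
      _ = (m : ℝ≥0∞) * μ F := by rw [measure_toMeasurable]
  exact absurd h (not_lt.mpr hle)

theorem vdc_sub_card {G : Type*} [AddCommGroup G] [LinearOrder G] [IsOrderedAddMonoid G] [DecidableEq G]
    (T : Finset G) (hT : T.Nonempty) :
    ∃ U : Finset G, 2 * T.card - 1 ≤ U.card ∧ ∀ u ∈ U, ∃ a ∈ T, ∃ b ∈ T, u = a - b := by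
  obtain ⟨l₀, hl₀T, hmin⟩ := T.exists_min_image id hT
  refine ⟨T.image (· - l₀) ∪ T.image (l₀ - ·), ?_, ?_⟩
  · have hinj₁ : Function.Injective (· - l₀) := sub_left_injective
    have hinj₂ : Function.Injective (l₀ - ·) := sub_right_injective
    have hint : T.image (· - l₀) ∩ T.image (l₀ - ·) ⊆ {0} := by
      intro u hu
      rw [Finset.mem_inter] at hu
      obtain ⟨a, ha, hua⟩ := Finset.mem_image.mp hu.1
      obtain ⟨b, hb, hub⟩ := Finset.mem_image.mp hu.2
      have h1 : (0 : G) ≤ u := hua ▸ sub_nonneg.mpr (hmin a ha)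
      have h2 : u ≤ (0 : G) := hub ▸ sub_nonpos.mpr (hmin b hb)
      simp [le_antisymm h2 h1]
    have hcard_int : (T.image (· - l₀) ∩ T.image (l₀ - ·)).card ≤ 1 :=
      (Finset.card_le_card hint).trans_eq (Finset.card_singleton 0)
    have hkey := Finset.card_union_add_card_inter (T.image (· - l₀)) (T.image (l₀ - ·))
    rw [Finset.card_image_of_injective T hinj₁, Finset.card_image_of_injective T hinj₂] at hkey
    omega
  · intro u hu
    rcases Finset.mem_union.mp hu with hu | hu
    · obtain ⟨a, ha, rfl⟩ := Finset.mem_image.mp hu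
      exact ⟨a, ha, l₀, hl₀T, rfl⟩
    · obtain ⟨b, hb, rfl⟩ := Finset.mem_image.mp hu
      exact ⟨l₀, hl₀T, b, hb, rfl⟩

theorem vdc_points {n : ℕ} (L : AddSubgroup (Fin n → ℝ)) [Countable L]
    {F : Set (Fin n → ℝ)} (fund : IsAddFundamentalDomain L F volume)
    {K : Set (Fin n → ℝ)} (hconv : Convex ℝ K) (hsymm : ∀ x ∈ K, -x ∈ K) (m : ℕ)
    (h : (m : ℝ≥0∞) * volume F < volume ((2⁻¹ : ℝ) • K)) :
    ∃ U : Finset (Fin n → ℝ), 2 * m + 1 ≤ U.card ∧ ↑U ⊆ (L : Set (Fin n → ℝ)) ∩ K := by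
  classical
  obtain ⟨x, hx⟩ := vdc_blichfeldt fund ((hconv.smul _).nullMeasurableSet _) m h
  obtain ⟨s, hs_sub, hs_card⟩ :=
    Set.exists_subset_encard_eq (Order.add_one_le_of_lt hx)
  have hs_fin : s.Finite := by
    refine finite_of_encard_le_coe (k := m + 1) ?_
    rw [hs_card]; push_cast; rfl
  set T : Finset L := hs_fin.toFinset with hT
  have hT_card : T.card = m + 1 := by
    have := hs_fin.encard_eq_coe_toFinset_card
    rw [hs_card] at this
    exact_mod_cast this.symm
  -- each element of T gives a point of `2⁻¹ • K`
  have hmemK : ∀ l ∈ T, -(l : Fin n → ℝ) + x ∈ (2⁻¹ : ℝ) • K := by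
    intro l hl
    have : x ∈ l +ᵥ ((2⁻¹ : ℝ) • K) := hs_sub (hs_fin.mem_toFinset.mp hl)
    rw [Set.mem_vadd_set_iff_neg_vadd_mem] at this
    simpa [AddSubgroup.vadd_def] using this
  -- differences of elements of T lie in K
  have hdiff : ∀ l ∈ T, ∀ l' ∈ T, (l : Fin n → ℝ) - (l' : Fin n → ℝ) ∈ K := by
    intro l hl l' hl'
    obtain ⟨u, hu, hu'⟩ := hmemK l' hl'
    obtain ⟨v, hv, hv'⟩ := hmemK l hl
    have hk : (2⁻¹ : ℝ) • u + (2⁻¹ : ℝ) • (-v) ∈ K :=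
      hconv hu (hsymm v hv) (by norm_num) (by norm_num) (by norm_num)
    have heq : (l : Fin n → ℝ) - (l' : Fin n → ℝ)
        = (2⁻¹ : ℝ) • u + (2⁻¹ : ℝ) • (-v) := by
      have hu'' : (2⁻¹ : ℝ) • u = -(l' : Fin n → ℝ) + x := hu'
      have hv'' : (2⁻¹ : ℝ) • v = -(l : Fin n → ℝ) + x := hv'
      rw [smul_neg, ← sub_eq_add_neg, hu'', hv'']
      abel
    rwa [heq]
  -- apply the counting lemma in the lexicographic order
  have hT_ne : T.Nonempty := Finset.card_pos.mp (by omega)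
  set T' : Finset (Lex (Fin n → ℝ)) := T.image (fun l : L => toLex (l : Fin n → ℝ)) with hT'
  have hT'_card : T'.card = m + 1 := by
    have hinj : Function.Injective (fun l : L => toLex (l : Fin n → ℝ)) :=
      fun a b hab => Subtype.coe_injective (toLex.injective hab)
    rw [hT', Finset.card_image_of_injective T hinj, hT_card]
  obtain ⟨U', hU'_card, hU'⟩ := vdc_sub_card T' (hT_ne.image _)
  refine ⟨U'.image (fun u => ofLex u), ?_, ?_⟩
  · rw [Finset.card_image_of_injective U' ofLex.injective]
    omega
  · intro u hu
    obtain ⟨u', hu', rfl⟩ := Finset.mem_image.mp (Finset.mem_coe.mp hu)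
    obtain ⟨a, ha, b, hb, rfl⟩ := hU' u' hu'
    obtain ⟨l, hl, rfl⟩ := Finset.mem_image.mp ha
    obtain ⟨l', hl', rfl⟩ := Finset.mem_image.mp hb
    exact ⟨sub_mem l.2 l'.2, hdiff l hl l' hl'⟩

set_option maxHeartbeats 1000000

/-- Corollary of van der Corput's theorem: for a full-rank lattice `Λ = Λ(Q) ⊂ ℝ^n` and a
compact convex body `K` symmetric about the origin,
`vol(K) < (|Λ ∩ K| + 1)·2^{n−1}·det(Λ)`. -/
theorem stmt_7 {n : ℕ} (Q : Matrix (Fin n) (Fin n) ℝ) (hQ : Q.det ≠ 0)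
    (K : Set (Fin n → ℝ)) (hconv : Convex ℝ K) (hcpt : IsCompact K)
    (hsymm : ∀ x ∈ K, -x ∈ K) :
    volume K <
      ENNReal.ofReal
        ((((Set.range (fun v : Fin n → ℤ => Q.mulVec (fun j => (v j : ℝ))) ∩ K).ncard : ℝ) + 1) *
          (2 : ℝ) ^ (n - 1) * |Q.det|) := by
  classical
  rcases Nat.eq_zero_or_pos n with hn | hn
  · -- the case n = 0
    subst hn
    have hdet : Q.det = 1 := Matrix.det_fin_zero
    have hvuniv : volume (Set.univ : Set (Fin 0 → ℝ)) = 1 := by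
      have : (Set.univ : Set (Fin 0 → ℝ)) = Set.univ.pi (fun _ => Set.univ) := by simp
      rw [this, MeasureTheory.volume_pi_pi]
      simp
    rcases K.eq_empty_or_nonempty with rfl | hKne
    · simp only [Set.inter_empty, Set.ncard_empty, Nat.cast_zero, zero_add, one_mul,
        measure_empty, hdet]
      norm_num
    · have hKuniv : K = Set.univ := hKne.eq_univ
      have hΛuniv : Set.range (fun v : Fin 0 → ℤ => Q.mulVec (fun j => (v j : ℝ)))
          = Set.univ := (Set.range_nonempty _).eq_univ
      rw [hKuniv, hΛuniv, Set.inter_univ, Set.ncard_univ, hvuniv, hdet]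
      have : Nat.card (Fin 0 → ℝ) = 1 := Nat.card_eq_one_iff_unique.mpr ⟨inferInstance, inferInstance⟩
      rw [this]
      norm_num
  -- main case : n ≥ 1
  by_contra hcon
  push_neg at hcon
  set Λ : Set (Fin n → ℝ) :=
    Set.range (fun v : Fin n → ℤ => Q.mulVec (fun j => (v j : ℝ))) with hΛdef
  set N : ℕ := (Λ ∩ K).ncard with hN
  clear_value N
  have hD : (0 : ℝ) < |Q.det| := abs_pos.mpr hQ
  have hR : (0 : ℝ) < ((N : ℝ) + 1) * (2 : ℝ) ^ (n - 1) * |Q.det| := by positivity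
  -- K is nonempty and contains 0
  have hKne : K.Nonempty := by
    rcases K.eq_empty_or_nonempty with rfl | h
    · rw [measure_empty] at hcon
      exact absurd (le_antisymm hcon zero_le) (ENNReal.ofReal_pos.mpr hR).ne'
    · exact h
  obtain ⟨k₀, hk₀⟩ := hKne
  have h0K : (0 : Fin n → ℝ) ∈ K := by
    have := hconv hk₀ (hsymm k₀ hk₀) (by norm_num : (0:ℝ) ≤ 2⁻¹)
      (by norm_num : (0:ℝ) ≤ 2⁻¹) (by norm_num)
    simpa using this
  -- the lattice as the ℤ-span of a basis
  have hQu : Invertible Q := Q.invertibleOfIsUnitDet (isUnit_iff_ne_zero.mpr hQ)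
  set e : (Fin n → ℝ) ≃ₗ[ℝ] (Fin n → ℝ) := Q.toLinearEquiv' hQu with he
  set b : Module.Basis (Fin n) ℝ (Fin n → ℝ) := (Pi.basisFun ℝ (Fin n)).map e with hb
  have hbrepr : ∀ (x : Fin n → ℝ) (i : Fin n), b.repr x i = e.symm x i := by
    intro x i
    rw [hb, Module.Basis.map_repr]
    simp
  have heapp : ∀ y : Fin n → ℝ, e y = Q.mulVec y := fun y => by
    rw [he]
    show Matrix.toLin' Q y = Q.mulVec y
    exact Matrix.toLin'_apply Q y
  have hΛspan : Λ = (Submodule.span ℤ (Set.range b) : Set (Fin n → ℝ)) := by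
    ext x
    constructor
    · rintro ⟨v, rfl⟩
      rw [SetLike.mem_coe, Module.Basis.mem_span_iff_repr_mem]
      intro i
      refine ⟨v i, ?_⟩
      rw [hbrepr]
      show (algebraMap ℤ ℝ) (v i) = e.symm (Q.mulVec (fun j => (v j : ℝ))) i
      rw [← heapp, LinearEquiv.symm_apply_apply]
      simp
    · intro hx
      rw [SetLike.mem_coe, Module.Basis.mem_span_iff_repr_mem] at hx
      choose v hv using hx
      refine ⟨v, ?_⟩
      have hvx : (fun j => (v j : ℝ)) = e.symm x := by
        funext i
        have := hv i
        rw [hbrepr] at this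
        simpa using this
      show Q.mulVec (fun j => (v j : ℝ)) = x
      rw [hvx, ← heapp, LinearEquiv.apply_symm_apply]
  set L : AddSubgroup (Fin n → ℝ) := (Submodule.span ℤ (Set.range b)).toAddSubgroup with hL
  have hLset : (L : Set (Fin n → ℝ)) = Λ := hΛspan.symm
  haveI : Countable L := inferInstanceAs (Countable (Submodule.span ℤ (Set.range b)))
  haveI hLdisc : DiscreteTopology L :=
    inferInstanceAs (DiscreteTopology (Submodule.span ℤ (Set.range b)).toAddSubgroup)
  have fund : IsAddFundamentalDomain L (ZSpan.fundamentalDomain b) volume :=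
    ZSpan.isAddFundamentalDomain' b volume
  -- volume of the fundamental domain
  have hvolF : volume (ZSpan.fundamentalDomain b) = ENNReal.ofReal |Q.det| := by
    rw [ZSpan.volume_fundamentalDomain b]
    congr 2
    rw [← Matrix.det_transpose]
    congr 1
    ext i j
    rw [Matrix.transpose_apply]
    show (b j) i = Q i j
    rw [hb]
    simp only [Module.Basis.map_apply, Pi.basisFun_apply]
    rw [heapp, Matrix.mulVec_single_one]
    rfl
  -- finiteness of lattice points in compact sets
  have hΛclosed : IsClosed (L : Set (Fin n → ℝ)) := AddSubgroup.isClosed_of_discrete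
  have h2Kcpt : IsCompact ((2 : ℝ) • K) := by
    rw [← Set.image_smul]
    exact hcpt.image (continuous_const_smul _)
  have hfin2K : ((L : Set (Fin n → ℝ)) ∩ (2 : ℝ) • K).Finite := by
    haveI : DiscreteTopology ((L : Set (Fin n → ℝ)) ∩ (2 : ℝ) • K : Set (Fin n → ℝ)) :=
      DiscreteTopology.of_subset hLdisc Set.inter_subset_left
    exact (h2Kcpt.inter_left hΛclosed).finite (isDiscrete_iff_discreteTopology.mpr this)
  have hK2K : K ⊆ (2 : ℝ) • K := by
    intro x hx
    rw [Set.mem_smul_set_iff_inv_smul_mem₀ (two_ne_zero)]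
    have := hconv hx h0K (by norm_num : (0:ℝ) ≤ 2⁻¹) (by norm_num : (0:ℝ) ≤ 2⁻¹) (by norm_num)
    simpa using this
  have hfinK : ((L : Set (Fin n → ℝ)) ∩ K).Finite :=
    hfin2K.subset (Set.inter_subset_inter_right _ hK2K)
  -- choice of a small dilation factor
  have hbad : ∀ p ∈ ((L : Set (Fin n → ℝ)) ∩ (2:ℝ) • K) \ K,
      ∃ δ > (0:ℝ), ∀ ε : ℝ, 0 < ε → ε < δ → p ∉ (1 + ε) • K := by
    rintro p ⟨-, hpK⟩
    have hcont : Filter.Tendsto (fun c : ℝ => (1 + c)⁻¹ • p) (nhds 0) (nhds p) := by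
      have h1 : Filter.Tendsto (fun c : ℝ => (1 + c)⁻¹) (nhds 0) (nhds 1) := by
        have : Filter.Tendsto (fun c : ℝ => 1 + c) (nhds 0) (nhds 1) := by
          simpa using (continuous_add_left (1:ℝ)).tendsto (0:ℝ)
        simpa using this.inv₀ (by norm_num)
      simpa using h1.smul
        (tendsto_const_nhds : Filter.Tendsto (fun _ : ℝ => p) (nhds (0:ℝ)) (nhds p))
    have hopen : IsOpen Kᶜ := hcpt.isClosed.isOpen_compl
    have hev : ∀ᶠ c : ℝ in nhds 0, (1 + c)⁻¹ • p ∈ Kᶜ :=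
      hcont.eventually (hopen.eventually_mem hpK)
    rw [Metric.eventually_nhds_iff] at hev
    obtain ⟨δ, hδpos, hδ⟩ := hev
    refine ⟨δ, hδpos, fun ε hε hεδ hmem => ?_⟩
    have h1ε : (1 + ε) ≠ 0 := by positivity
    rw [Set.mem_smul_set_iff_inv_smul_mem₀ h1ε] at hmem
    exact hδ (by rw [Real.dist_eq]; rwa [sub_zero, abs_of_pos hε]) hmem
  choose! δ hδpos hδ using hbad
  set B := (((L : Set (Fin n → ℝ)) ∩ (2:ℝ) • K) \ K) with hB
  have hBfin : B.Finite := hfin2K.diff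
  set Bf := hBfin.toFinset with hBf
  set scand : Finset ℝ := insert (1:ℝ) (Bf.image δ) with hscand
  have hscne : scand.Nonempty := ⟨1, Finset.mem_insert_self _ _⟩
  set c : ℝ := scand.min' hscne with hc
  have hcpos : 0 < c := by
    rw [hc]
    rw [Finset.lt_min'_iff]
    intro y hy
    rcases Finset.mem_insert.mp hy with rfl | hy
    · norm_num
    · obtain ⟨p, hp, rfl⟩ := Finset.mem_image.mp hy
      exact hδpos p (hBfin.mem_toFinset.mp hp)
  obtain ⟨ε, hεpos, hεlt1, hεltδ⟩ :
      ∃ ε : ℝ, 0 < ε ∧ ε < 1 ∧ ∀ p ∈ B, ε < δ p := by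
    refine ⟨c / 2, by positivity, ?_, ?_⟩
    · have h1 : c ≤ 1 := Finset.min'_le _ _ (Finset.mem_insert_self _ _)
      linarith
    · intro p hp
      have h1 : c ≤ δ p := Finset.min'_le _ _ (Finset.mem_insert_of_mem
        (Finset.mem_image_of_mem δ (hBfin.mem_toFinset.mpr hp)))
      linarith
  -- (1+ε) • K ⊆ 2 • K
  have h1εsub : (1 + ε) • K ⊆ (2:ℝ) • K := by
    rintro _ ⟨y, hy, rfl⟩
    rw [Set.mem_smul_set_iff_inv_smul_mem₀ (two_ne_zero)]
    have hmem := hconv hy h0K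
      (by positivity : (0:ℝ) ≤ (1 + ε)/2)
      (by linarith : (0:ℝ) ≤ 1 - (1 + ε)/2) (by ring)
    have : ((1 + ε)/2) • y + (1 - (1 + ε)/2) • (0 : Fin n → ℝ) = (2:ℝ)⁻¹ • (1 + ε) • y := by
      rw [smul_smul]
      simp [mul_comm]
      ring_nf
    rwa [this] at hmem
  have hsubK : (L : Set (Fin n → ℝ)) ∩ (1 + ε) • K ⊆ (L : Set (Fin n → ℝ)) ∩ K := by
    rintro q ⟨hqL, hqK'⟩
    refine ⟨hqL, ?_⟩
    by_contra hqK
    have hqB : q ∈ B := ⟨⟨hqL, h1εsub hqK'⟩, hqK⟩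
    exact hδ q hqB ε hεpos (hεltδ q hqB) hqK'
  -- apply the van der Corput argument to (1+ε) • K
  set m : ℕ := (N + 1) / 2 with hm
  clear_value m
  have hVKne : volume K ≠ ⊤ := hcpt.measure_lt_top.ne
  set VK : ℝ := (volume K).toReal with hVK
  clear_value VK
  have hVKeq : volume K = ENNReal.ofReal VK := by
    rw [hVK]; exact (ENNReal.ofReal_toReal hVKne).symm
  have hRVK : ((N : ℝ) + 1) * (2 : ℝ) ^ (n - 1) * |Q.det| ≤ VK := by
    rw [hVK]
    have := ENNReal.toReal_mono hVKne hcon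
    rwa [ENNReal.toReal_ofReal hR.le] at this
  have hconv' : Convex ℝ ((1 + ε) • K) := hconv.smul _
  have hsymm' : ∀ x ∈ (1 + ε) • K, -x ∈ (1 + ε) • K := by
    rintro _ ⟨y, hy, rfl⟩
    exact ⟨-y, hsymm y hy, by simp⟩
  have hVpos : 0 < VK := lt_of_lt_of_le hR hRVK
  have hreal : (m : ℝ) * |Q.det| < (2⁻¹ * (1 + ε))^n * VK := by
    have h2m : (m : ℝ) * 2 ≤ (N : ℝ) + 1 := by
      have h' : m * 2 ≤ N + 1 := by omega
      exact_mod_cast h'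
    have hpow1 : 1 < (1 + ε)^n := one_lt_pow₀ (by linarith) (by omega)
    have hhalf : ((2:ℝ))^(n-1) * 2 = 2^n := by
      rw [← pow_succ]
      congr 1
      omega
    have h2n1 : ((2:ℝ))^(n-1) = 2^n / 2 := by
      rw [eq_div_iff (two_ne_zero : (2:ℝ) ≠ 0)]; exact hhalf
    have hexp : ((2:ℝ)⁻¹ * (1+ε))^n * (((N:ℝ)+1) * 2^(n-1) * |Q.det|)
        = (1+ε)^n * (((N:ℝ)+1) * |Q.det| / 2) := by
      rw [h2n1, mul_pow, inv_pow]
      have h2npos : (0:ℝ) < 2^n := by positivity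
      field_simp
    have hA : (0:ℝ) < ((N:ℝ)+1) * |Q.det| / 2 := by positivity
    calc (m:ℝ) * |Q.det| ≤ ((N:ℝ)+1) * |Q.det| / 2 := by nlinarith [hD.le, h2m]
      _ < (1+ε)^n * (((N:ℝ)+1) * |Q.det| / 2) := (lt_mul_iff_one_lt_left hA).mpr hpow1
      _ = ((2:ℝ)⁻¹ * (1+ε))^n * (((N:ℝ)+1) * 2^(n-1) * |Q.det|) := hexp.symm
      _ ≤ ((2:ℝ)⁻¹ * (1+ε))^n * VK :=
          mul_le_mul_of_nonneg_left hRVK (by positivity)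
  have hvol : (m : ℝ≥0∞) * volume (ZSpan.fundamentalDomain b)
      < volume ((2⁻¹ : ℝ) • ((1 + ε) • K)) := by
    rw [hvolF, smul_smul,
      MeasureTheory.Measure.addHaar_smul_of_nonneg volume
        (by positivity : (0:ℝ) ≤ 2⁻¹ * (1 + ε)) K,
      hVKeq, ← ENNReal.ofReal_natCast m, ← ENNReal.ofReal_mul (by positivity),
      ← ENNReal.ofReal_mul (by positivity)]
    simp only [Module.finrank_fintype_fun_eq_card, Fintype.card_fin]
    exact (ENNReal.ofReal_lt_ofReal_iff
      (lt_of_le_of_lt (by positivity : (0:ℝ) ≤ (m:ℝ) * |Q.det|) hreal)).mpr hreal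
  obtain ⟨U, hUcard, hUsub⟩ := vdc_points L fund hconv' hsymm' m hvol
  have hUsub' : (U : Set (Fin n → ℝ)) ⊆ (L : Set (Fin n → ℝ)) ∩ K :=
    fun u hu => hsubK (hUsub hu)
  have hNge : 2 * m + 1 ≤ N := by
    calc 2 * m + 1 ≤ U.card := hUcard
      _ = (U : Set (Fin n → ℝ)).ncard := (Set.ncard_coe_finset U).symm
      _ ≤ ((L : Set (Fin n → ℝ)) ∩ K).ncard := Set.ncard_le_ncard hUsub' hfinK
      _ = N := by rw [hLset]; exact hN.symm
  omega
end

section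
/- Let B ∈ ℤ^{ℓ×k} (ℓ ≤ k) have full row rank and let C ∈ ℤ^{r×ℓ} be right-invertible over ℤ (there is an integer matrix C♯ with C·C♯ = I_r). Then the product of the elementary divisors of C·B is at most the product of the elementary divisors of B, i.e., det(Σ(CB)) ≤ det(Σ(B)). -/
open Matrix

lemma bezout_fin {n : ℕ} (v : Fin n → ℤ) :
    ∃ w : Fin n → ℤ, ∑ i, w i * v i = Finset.univ.gcd v := by
  have hP : (Ideal.span (Set.range v)).IsPrincipal := IsPrincipalIdealRing.principal _
  obtain ⟨d, hd⟩ := hP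
  have hdvd : ∀ i, d ∣ v i := by
    intro i
    have : v i ∈ Ideal.span (Set.range v) := Ideal.subset_span ⟨i, rfl⟩
    rw [hd] at this
    exact Ideal.mem_span_singleton.mp this
  have hg : Finset.univ.gcd v ∈ Ideal.span (Set.range v) := by
    rw [hd]
    exact Ideal.mem_span_singleton.mpr (Finset.dvd_gcd fun i _ => hdvd i)
  obtain ⟨c, hc⟩ := (Submodule.mem_span_range_iff_exists_fun ℤ).mp hg
  exact ⟨c, by simpa [smul_eq_mul] using hc⟩

lemma extend_right_invertible {m l : ℕ} (hml : m < l) (C : Matrix (Fin m) (Fin l) ℤ)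
    (Cs : Matrix (Fin l) (Fin m) ℤ) (h : C * Cs = 1) :
    ∃ (C' : Matrix (Fin (m + 1)) (Fin l) ℤ) (Cs' : Matrix (Fin l) (Fin (m + 1)) ℤ),
      C' * Cs' = 1 ∧ ∀ i : Fin m, ∀ j, C' i.castSucc j = C i j := by
  set K : Matrix (Fin l) (Fin l) ℤ := 1 - Cs * C with hK
  have hKK : K * K = K := by
    simp only [hK, Matrix.mul_sub, Matrix.sub_mul, Matrix.one_mul, Matrix.mul_one]
    rw [Matrix.mul_assoc Cs C (Cs * C), ← Matrix.mul_assoc C Cs C, h, Matrix.one_mul]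
    abel
  have hCK : C * K = 0 := by
    simp only [hK, Matrix.mul_sub, Matrix.mul_one]
    rw [← Matrix.mul_assoc C Cs C, h, Matrix.one_mul, sub_self]
  have hKne : K ≠ 0 := by
    intro h0
    have h1 : Cs * C = 1 := by
      have := sub_eq_zero.mp (hK ▸ h0 : (1 : Matrix (Fin l) (Fin l) ℤ) - Cs * C = 0)
      exact this.symm
    have hrank : (1 : Matrix (Fin l) (Fin l) ℤ).rank = l := by
      simpa using Matrix.rank_one (n := Fin l) (R := ℤ)
    rw [← h1] at hrank
    have h2 : (Cs * C).rank ≤ m := le_trans (Matrix.rank_mul_le_left Cs C)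
      (by simpa using Matrix.rank_le_card_width Cs)
    omega
  obtain ⟨i₀, hi₀⟩ : ∃ i₀, K i₀ ≠ 0 := by
    by_contra hcon
    push_neg at hcon
    exact hKne (by ext i j; simp [hcon i])
  set u : Fin l → ℤ := K i₀ with hu
  have huK : u ᵥ* K = u := by
    funext j
    have := congr_fun (congr_fun hKK i₀) j
    simpa [Matrix.mul_apply, Matrix.vecMul, dotProduct, hu] using this
  -- gcd of u
  set g₀ : ℤ := Finset.univ.gcd u with hg₀
  have hg₀ne : g₀ ≠ 0 := by
    rw [hg₀, Ne, Finset.gcd_eq_zero_iff]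
    intro hall
    exact hi₀ (funext fun j => hall j (Finset.mem_univ j))
  have hdvd : ∀ j, g₀ ∣ u j := fun j => Finset.gcd_dvd (Finset.mem_univ j)
  set v : Fin l → ℤ := fun j => u j / g₀ with hv
  have huv : ∀ j, u j = g₀ * v j := fun j => (Int.mul_ediv_cancel' (hdvd j)).symm
  have hgv : Finset.univ.gcd v = 1 := by
    have h1 : Finset.univ.gcd u = normalize g₀ * Finset.univ.gcd v := by
      rw [show Finset.univ.gcd u = Finset.univ.gcd (fun j => g₀ * v j) from by
        apply Finset.gcd_congr rfl; intro j _; exact huv j]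
      exact Finset.gcd_mul_left
    have h2 : normalize g₀ = g₀ := by
      rw [hg₀]; exact Finset.normalize_gcd
    rw [h2, ← hg₀] at h1
    exact mul_left_cancel₀ hg₀ne (show g₀ * Finset.univ.gcd v = g₀ * 1 by
      rw [mul_one, ← h1])
  have hvK : v ᵥ* K = v := by
    funext j
    have h1 := congr_fun huK j
    simp only [Matrix.vecMul, dotProduct] at h1 ⊢
    have : ∑ x, u x * K x j = g₀ * ∑ x, v x * K x j := by
      rw [Finset.mul_sum]; apply Finset.sum_congr rfl; intro x _; rw [huv x]; ring
    rw [this, huv j] at h1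
    exact mul_left_cancel₀ hg₀ne h1
  have hvCs : v ᵥ* Cs = 0 := by
    have hvP : v ᵥ* (Cs * C) = 0 := by
      have h3 : v - v ᵥ* (Cs * C) = v := by
        have : v ᵥ* (1 - Cs * C) = v := hvK
        rwa [Matrix.vecMul_sub, Matrix.vecMul_one] at this
      exact sub_eq_self.mp h3
    calc v ᵥ* Cs = v ᵥ* (Cs * (C * Cs)) := by rw [h, Matrix.mul_one]
    _ = v ᵥ* (Cs * C * Cs) := by rw [Matrix.mul_assoc]
    _ = (v ᵥ* (Cs * C)) ᵥ* Cs := by rw [Matrix.vecMul_vecMul]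
    _ = 0 := by rw [hvP, Matrix.zero_vecMul]
  obtain ⟨w, hw⟩ := bezout_fin v
  rw [hgv] at hw
  set w' : Fin l → ℤ := K *ᵥ w with hw'
  have hCw' : C *ᵥ w' = 0 := by
    rw [hw', Matrix.mulVec_mulVec, hCK]
    funext i; simp [Matrix.mulVec, dotProduct]
  have hvw' : v ⬝ᵥ w' = 1 := by
    rw [hw', Matrix.dotProduct_mulVec, hvK]
    rw [← hw]
    simp [dotProduct, mul_comm]
  -- construct the matrices
  refine ⟨Matrix.of (Fin.snoc (fun i => C i) v),
    Matrix.of (fun i => Fin.snoc (Cs i : Fin m → ℤ) (w' i)), ?_, ?_⟩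
  · ext i j
    refine Fin.lastCases ?_ ?_ i
    · refine Fin.lastCases ?_ ?_ j
      · -- last, last
        have : ∑ x, v x * w' x = 1 := hvw'
        simp only [Matrix.mul_apply, Matrix.of_apply, Fin.snoc_last, Matrix.one_apply_eq]
        exact this
      · intro j'
        have : ∑ x, v x * Cs x j' = 0 := congr_fun hvCs j'
        simp only [Matrix.mul_apply, Matrix.of_apply, Fin.snoc_last, Fin.snoc_castSucc]
        rw [Matrix.one_apply_ne (by simp [Fin.ext_iff]; omega)]
        simpa [Matrix.vecMul, dotProduct] using this
    · intro i'
      refine Fin.lastCases ?_ ?_ j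
      · have : ∑ x, C i' x * w' x = 0 := congr_fun hCw' i'
        simp only [Matrix.mul_apply, Matrix.of_apply, Fin.snoc_last, Fin.snoc_castSucc]
        rw [Matrix.one_apply_ne (by simp [Fin.ext_iff]; omega)]
        simpa [Matrix.mulVec, dotProduct] using this
      · intro j'
        have : ∑ x, C i' x * Cs x j' = (1 : Matrix (Fin m) (Fin m) ℤ) i' j' := by
          rw [← Matrix.mul_apply, h]
        simp only [Matrix.mul_apply, Matrix.of_apply, Fin.snoc_castSucc]
        rw [this]
        by_cases hij : i' = j'
        · subst hij; simp
        · rw [Matrix.one_apply_ne (by simpa using hij),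
            Matrix.one_apply_ne (by simp [Fin.ext_iff] at hij ⊢; omega)]
  · intro i j; simp

lemma key_dvd {l : ℕ} (g : ℤ) (A : Matrix (Fin l) (Fin l) ℤ) :
    ∀ d m, m + d = l → ∀ C : Matrix (Fin m) (Fin l) ℤ,
      (∃ Cs : Matrix (Fin l) (Fin m) ℤ, C * Cs = 1) →
      (∀ e : Fin m ↪ Fin l, g ∣ ((C * A).submatrix id ⇑e).det) → g ∣ A.det := by
  intro d
  induction d with
  | zero =>
    intro m hm C hC H
    have hml : m = l := by omega
    subst hml
    obtain ⟨Cs, hCs⟩ := hC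
    have h1 : g ∣ C.det * A.det := by
      have := H (Function.Embedding.refl (Fin m))
      rw [show ((C * A).submatrix id ⇑(Function.Embedding.refl (Fin m))) = C * A from by
        ext i j; simp, Matrix.det_mul] at this
      exact this
    have h2 : C.det * Cs.det = 1 := by
      have := congr_arg Matrix.det hCs
      rwa [Matrix.det_mul, Matrix.det_one] at this
    have h3 : A.det = Cs.det * (C.det * A.det) := by
      rw [← mul_assoc, mul_comm Cs.det C.det, h2, one_mul]
    rw [h3]
    exact h1.mul_left Cs.det
  | succ d ih =>
    intro m hm C hC H
    obtain ⟨Cs, hCs⟩ := hC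
    obtain ⟨C', Cs', hC', hrow⟩ := extend_right_invertible (by omega) C Cs hCs
    refine ih (m + 1) (by omega) C' ⟨Cs', hC'⟩ ?_
    intro e
    have hexp := Matrix.det_succ_row ((C' * A).submatrix id ⇑e) (Fin.last m)
    rw [hexp]
    apply Finset.dvd_sum
    intro j _
    apply Dvd.dvd.mul_left
    have hsub : ((C' * A).submatrix id ⇑e).submatrix (Fin.last m).succAbove j.succAbove
        = (C * A).submatrix id (⇑e ∘ j.succAbove) := by
      rw [Fin.succAbove_last]
      ext i c
      simp only [Matrix.submatrix_apply, id_eq, Function.comp_apply, Matrix.mul_apply]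
      exact Finset.sum_congr rfl fun t _ => by rw [hrow i t]
    rw [hsub]
    exact H ⟨⇑e ∘ j.succAbove, e.injective.comp (Fin.succAbove_right_injective)⟩

lemma exists_nonzero_minor {l k : ℕ} (B : Matrix (Fin l) (Fin k) ℤ) (hB : B.rank = l) :
    ∃ f : Fin l ↪ Fin k, (B.submatrix id ⇑f).det ≠ 0 := by
  classical
  -- the ℤ-linear cast map
  let φ : (Fin l → ℤ) →ₗ[ℤ] (Fin l → ℚ) :=
    LinearMap.pi fun j => (Int.castAddHom ℚ).toIntLinearMap.comp (LinearMap.proj j)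
  have hφ : ∀ x j, φ x j = (x j : ℚ) := fun x j => rfl
  have hφinj : Function.Injective φ := by
    intro a b hab
    funext j
    have := congr_fun hab j
    rw [hφ, hφ] at this
    exact_mod_cast this
  set N := LinearMap.range B.mulVecLin with hN
  haveI : Module.Finite ℤ N := by
    have : Module.Finite ℤ (Fin k → ℤ) := inferInstance
    exact Module.Finite.range B.mulVecLin
  have hfr : Module.finrank ℤ N = l := hB
  let b : Module.Basis (Fin l) ℤ N := (Module.finBasis ℤ N).reindex (finCongr hfr)
  have hx : LinearIndependent ℤ (fun i => (b i : Fin l → ℤ)) := by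
    have := b.linearIndependent
    exact this.map' N.subtype (Submodule.ker_subtype N)
  set y : Fin l → (Fin l → ℚ) := fun i => φ (b i : Fin l → ℤ) with hy
  have hyZ : LinearIndependent ℤ y := hx.map' φ (LinearMap.ker_eq_bot.mpr hφinj)
  have hyQ : LinearIndependent ℚ y := (LinearIndependent.iff_fractionRing ℤ ℚ).mp hyZ
  set B' : Matrix (Fin l) (Fin k) ℚ := B.map (Int.cast : ℤ → ℚ) with hB'
  set W := LinearMap.range B'.mulVecLin with hW
  have hymem : ∀ i, y i ∈ W := by
    intro i
    obtain ⟨z, hz⟩ := (b i).2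
    refine ⟨fun t => (z t : ℚ), ?_⟩
    funext j
    rw [hy]
    show (B'.mulVec fun t => (z t : ℚ)) j = φ _ j
    rw [hφ]
    have hzj : (B.mulVec z) j = (b i : Fin l → ℤ) j := congr_fun hz j
    rw [← hzj]
    simp only [Matrix.mulVec, dotProduct, hB', Matrix.map_apply]
    push_cast
    rfl
  have hWl : l ≤ Module.finrank ℚ W := by
    let y' : Fin l → W := fun i => ⟨y i, hymem i⟩
    have hy' : LinearIndependent ℚ y' := by
      apply LinearIndependent.of_comp W.subtype
      exact hyQ
    simpa using hy'.fintype_card_le_finrank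
  -- extract independent columns
  obtain ⟨s, hsub, hspan, hind⟩ := exists_linearIndependent ℚ (Set.range B'ᵀ)
  have hspanW : Submodule.span ℚ s = W := by
    rw [hspan, hW, Matrix.range_mulVecLin]
    rfl
  have hsfin : s.Finite := hind.setFinite
  haveI : Fintype ↑s := hsfin.fintype
  have hcard : s.toFinset.card = Module.finrank ℚ W := by
    rw [← finrank_span_set_eq_card hind, hspanW]
  have hWle : Module.finrank ℚ W ≤ l := by
    have := Submodule.finrank_le W
    simpa using this
  have hWeq : Module.finrank ℚ W = l := le_antisymm hWle hWl
  have hcards : Fintype.card ↑s = l := by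
    rw [← Set.toFinset_card, hcard, hWeq]
  have hc : ∀ v : ↑s, ∃ i : Fin k, B'ᵀ i = (v : Fin l → ℚ) := fun v => hsub v.2
  choose idx hidx using hc
  have hidxinj : Function.Injective idx := by
    intro a b hab
    apply Subtype.ext
    rw [← hidx a, ← hidx b, hab]
  let e0 : Fin l ≃ ↑s := (Fintype.equivFinOfCardEq hcards).symm
  set f : Fin l → Fin k := fun i => idx (e0 i) with hf
  have hcols : LinearIndependent ℚ (fun i => (B'.submatrix id f)ᵀ i) := by
    have h1 : LinearIndependent ℚ (fun v : ↑s => (v : Fin l → ℚ)) := hind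
    have h2 := h1.comp e0 e0.injective
    convert h2 using 1
    funext i
    funext j
    show B' j (f i) = _
    have := congr_fun (hidx (e0 i)) j
    exact this
  have hunit : IsUnit (B'.submatrix id f) := Matrix.linearIndependent_cols_iff_isUnit.mp hcols
  have hdet : (B'.submatrix id f).det ≠ 0 :=
    ((Matrix.isUnit_iff_isUnit_det _).mp hunit).ne_zero
  refine ⟨⟨f, hidxinj.comp e0.injective⟩, ?_⟩
  show (B.submatrix id f).det ≠ 0
  intro h0
  apply hdet
  have : B'.submatrix id f = (B.submatrix id f).map (Int.cast : ℤ → ℚ) := by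
    rw [hB', Matrix.submatrix_map]
  rw [this, show ((B.submatrix id f).map (Int.cast : ℤ → ℚ))
      = (Int.castRingHom ℚ).mapMatrix (B.submatrix id f) from rfl,
    ← RingHom.map_det, h0]
  simp

/-- Let `B ∈ ℤ^{l×k}` (`l ≤ k`) have full row rank and `C ∈ ℤ^{r×l}` be right-invertible
over ℤ.  Then the product of the elementary divisors of `C·B` is at most the product of
the elementary divisors of `B`: `det(Σ(CB)) ≤ det(Σ(B))`, where `det(Σ(M))` equals the
positive gcd of the maximal-size minors of `M`. -/
theorem stmt_10 {r l k : ℕ} (hlk : l ≤ k) (B : Matrix (Fin l) (Fin k) ℤ)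
    (hB : B.rank = l) (C : Matrix (Fin r) (Fin l) ℤ)
    (hC : ∃ Cs : Matrix (Fin l) (Fin r) ℤ, C * Cs = 1) :
    Finset.univ.gcd (fun f : Fin r ↪ Fin k => ((C * B).submatrix id (⇑f)).det) ≤
      Finset.univ.gcd (fun f : Fin l ↪ Fin k => (B.submatrix id (⇑f)).det) := by
  classical
  obtain ⟨Cs, hCs⟩ := hC
  set g : ℤ := Finset.univ.gcd (fun f : Fin r ↪ Fin k => ((C * B).submatrix id (⇑f)).det) with hg
  set D : ℤ := Finset.univ.gcd (fun f : Fin l ↪ Fin k => (B.submatrix id (⇑f)).det) with hD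
  have hrl : r ≤ l := by
    have h1 : (C * Cs).rank = r := by
      rw [hCs]; simpa using Matrix.rank_one (n := Fin r) (R := ℤ)
    have h2 : (C * Cs).rank ≤ l := le_trans (Matrix.rank_mul_le_left C Cs)
      (by simpa using Matrix.rank_le_card_width C)
    omega
  have hgD : g ∣ D := by
    apply Finset.dvd_gcd
    intro f _
    apply key_dvd g (B.submatrix id ⇑f) (l - r) r (by omega) C ⟨Cs, hCs⟩
    intro e
    have heq : (C * B.submatrix id ⇑f).submatrix id ⇑e
        = (C * B).submatrix id (⇑(e.trans f)) := by
      ext i j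
      simp [Matrix.mul_apply]
    rw [heq]
    exact Finset.gcd_dvd (Finset.mem_univ (e.trans f))
  have hDpos : 0 < D := by
    obtain ⟨f0, hf0⟩ := exists_nonzero_minor B hB
    have hDne : D ≠ 0 := by
      intro h0
      rw [hD, Finset.gcd_eq_zero_iff] at h0
      exact hf0 (h0 f0 (Finset.mem_univ f0))
    have hDnn : 0 ≤ D := by
      have hn : normalize D = D := by rw [hD]; exact Finset.normalize_gcd
      rw [← Int.abs_eq_normalize] at hn
      exact hn ▸ abs_nonneg D
    omega
  exact Int.le_of_dvd hDpos hgD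
end

section
/- For any full row-rank integer matrix Q ∈ ℤ^{m×n} and any odd prime q satisfying q > 1 + 2·√(det(Q·Qᵀ)), the reduction of Q modulo q represents the same matroid as Q: a set of columns of Q is linearly independent over ℚ if and only if the corresponding set of columns of Q mod q is linearly independent over 𝔽_q. -/
open Matrix Finset Equiv

private lemma sign_sq {m : ℕ} (σ : Equiv.Perm (Fin m)) :
    ((Equiv.Perm.sign σ : ℤˣ) : ℤ) * ((Equiv.Perm.sign σ : ℤˣ) : ℤ) = 1 := by
  rw [← Units.val_mul, Int.units_mul_self, Units.val_one]

private lemma det_apply_int {m : ℕ} (M : Matrix (Fin m) (Fin m) ℤ) :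
    M.det = ∑ σ : Equiv.Perm (Fin m), (Equiv.Perm.sign σ : ℤ) * ∏ i, M (σ i) i := by
  rw [Matrix.det_apply']
  norm_cast

private lemma cb_identity {m n : ℕ} (Q : Matrix (Fin m) (Fin n) ℤ) :
    (Nat.factorial m : ℤ) * (Q * Qᵀ).det =
      ∑ p : Fin m → Fin n, (Q.submatrix id p).det ^ 2 := by
  have h1 : ∀ p : Fin m → Fin n, (Q.submatrix id p).det ^ 2 =
      ∑ σ : Perm (Fin m), ∑ τ : Perm (Fin m),
        ((Perm.sign σ : ℤ) * (Perm.sign τ : ℤ)) *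
          ∏ i, Q (σ i) (p i) * Q (τ i) (p i) := by
    intro p
    rw [det_apply_int, sq, Finset.sum_mul_sum]
    refine Finset.sum_congr rfl fun σ _ => Finset.sum_congr rfl fun τ _ => ?_
    simp only [Matrix.submatrix_apply, id_eq]
    rw [Finset.prod_mul_distrib]
    ring
  have h2 : ∀ σ : Perm (Fin m),
      (∑ τ : Perm (Fin m), ((Perm.sign σ : ℤ) * (Perm.sign τ : ℤ)) *
        ∏ i, (Q * Qᵀ) (σ i) (τ i)) = (Q * Qᵀ).det := by
    intro σ
    have e1 := Fintype.sum_equiv (Equiv.mulRight σ)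
      (fun ρ : Perm (Fin m) => ((Perm.sign σ : ℤ) * (Perm.sign (ρ * σ) : ℤ)) *
        ∏ i, (Q * Qᵀ) (σ i) ((ρ * σ) i))
      (fun τ : Perm (Fin m) => ((Perm.sign σ : ℤ) * (Perm.sign τ : ℤ)) *
        ∏ i, (Q * Qᵀ) (σ i) (τ i))
      (fun ρ => rfl)
    rw [← e1]
    have e2 : ∀ ρ : Perm (Fin m),
        ((Perm.sign σ : ℤ) * (Perm.sign (ρ * σ) : ℤ)) *
          ∏ i, (Q * Qᵀ) (σ i) ((ρ * σ) i)
        = (Perm.sign ρ : ℤ) * ∏ j, (Q * Qᵀ)ᵀ (ρ j) j := by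
      intro ρ
      have hs : (Perm.sign σ : ℤ) * (Perm.sign (ρ * σ) : ℤ) = (Perm.sign ρ : ℤ) := by
        rw [Perm.sign_mul, Units.val_mul]
        linear_combination ((Perm.sign ρ : ℤˣ) : ℤ) * sign_sq σ
      have hp : ∏ i, (Q * Qᵀ) (σ i) ((ρ * σ) i) = ∏ j, (Q * Qᵀ)ᵀ (ρ j) j := by
        rw [← Equiv.prod_comp σ (fun j => (Q * Qᵀ)ᵀ (ρ j) j)]
        simp [Matrix.transpose_apply, Perm.mul_apply]
      rw [hs, hp]
    rw [Finset.sum_congr rfl fun ρ _ => e2 ρ, ← det_apply_int, Matrix.det_transpose]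
  calc (Nat.factorial m : ℤ) * (Q * Qᵀ).det
      = ∑ σ : Perm (Fin m), ∑ τ : Perm (Fin m),
          ((Perm.sign σ : ℤ) * (Perm.sign τ : ℤ)) *
            ∏ i, (Q * Qᵀ) (σ i) (τ i) := by
        rw [Finset.sum_congr rfl fun σ _ => h2 σ, Finset.sum_const, Finset.card_univ,
          Fintype.card_perm, Fintype.card_fin, nsmul_eq_mul]
    _ = ∑ σ : Perm (Fin m), ∑ τ : Perm (Fin m),
          ((Perm.sign σ : ℤ) * (Perm.sign τ : ℤ)) *
            ∑ p : Fin m → Fin n, ∏ i, Q (σ i) (p i) * Q (τ i) (p i) := by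
        refine Finset.sum_congr rfl fun σ _ => Finset.sum_congr rfl fun τ _ => ?_
        congr 1
        rw [show (∏ i, (Q * Qᵀ) (σ i) (τ i)) = ∏ i, ∑ k, Q (σ i) k * Q (τ i) k from
          Finset.prod_congr rfl fun i _ => by rw [Matrix.mul_apply]; rfl]
        rw [Finset.prod_univ_sum]
        rw [Fintype.piFinset_univ]
    _ = ∑ σ : Perm (Fin m), ∑ τ : Perm (Fin m), ∑ p : Fin m → Fin n,
          ((Perm.sign σ : ℤ) * (Perm.sign τ : ℤ)) *
            ∏ i, Q (σ i) (p i) * Q (τ i) (p i) :=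
        Finset.sum_congr rfl fun σ _ => Finset.sum_congr rfl fun τ _ => Finset.mul_sum _ _ _
    _ = ∑ p : Fin m → Fin n, ∑ σ : Perm (Fin m), ∑ τ : Perm (Fin m),
          ((Perm.sign σ : ℤ) * (Perm.sign τ : ℤ)) *
            ∏ i, Q (σ i) (p i) * Q (τ i) (p i) := by
        rw [Finset.sum_congr rfl fun σ (_ : σ ∈ univ) => Finset.sum_comm]
        exact Finset.sum_comm
    _ = ∑ p : Fin m → Fin n, (Q.submatrix id p).det ^ 2 :=
        Finset.sum_congr rfl fun p _ => (h1 p).symm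

private lemma minor_sq_le {m n : ℕ} (Q : Matrix (Fin m) (Fin n) ℤ)
    (b : Fin m → Fin n) (hb : Function.Injective b) :
    (Q.submatrix id b).det ^ 2 ≤ (Q * Qᵀ).det := by
  have key := cb_identity Q
  have himg : ∀ σ : Perm (Fin m),
      (Q.submatrix id (b ∘ σ)).det ^ 2 = (Q.submatrix id b).det ^ 2 := by
    intro σ
    have h : Q.submatrix id (b ∘ σ) = (Q.submatrix id b).submatrix id σ := rfl
    rw [h, Matrix.det_permute', mul_pow, sq, ← Int.cast_mul, ← Units.val_mul,
      Int.units_mul_self]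
    simp
  have hinj : Function.Injective fun σ : Perm (Fin m) => b ∘ σ := fun σ τ h =>
    Equiv.ext fun i => hb (congrFun h i)
  have himage : ∑ p ∈ Finset.univ.image (fun σ : Perm (Fin m) => b ∘ σ),
      (Q.submatrix id p).det ^ 2
      = ∑ σ : Perm (Fin m), (Q.submatrix id (b ∘ σ)).det ^ 2 :=
    Finset.sum_image (fun σ _ τ _ h => hinj h)
  have hge : ∑ p ∈ Finset.univ.image (fun σ : Perm (Fin m) => b ∘ σ),
      (Q.submatrix id p).det ^ 2
      ≤ ∑ p : Fin m → Fin n, (Q.submatrix id p).det ^ 2 :=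
    Finset.sum_le_sum_of_subset_of_nonneg (Finset.subset_univ _) (fun p _ _ => sq_nonneg _)
  rw [himage, Finset.sum_congr rfl fun σ _ => himg σ, Finset.sum_const, Finset.card_univ,
    Fintype.card_perm, Fintype.card_fin, nsmul_eq_mul, ← key] at hge
  exact le_of_mul_le_mul_left hge (by positivity)

private lemma span_cols_top {m n : ℕ} (Q : Matrix (Fin m) (Fin n) ℤ) (hrank : Q.rank = m) :
    Submodule.span ℚ (Set.range (Q.map (Int.cast : ℤ → ℚ))ᵀ) = ⊤ := by
  classical
  set S := Submodule.span ℚ (Set.range (Q.map (Int.cast : ℤ → ℚ))ᵀ) with hSdef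
  set N : Submodule ℤ (Fin m → ℤ) := Submodule.span ℤ (Set.range Qᵀ) with hNdef
  have hN : Module.finrank ℤ N = m := by
    have := (Matrix.rank_eq_finrank_span_cols Q).symm.trans hrank
    exact this
  haveI : Module.Finite ℤ N := Module.Finite.iff_fg.mpr (IsNoetherian.noetherian N)
  haveI : Module.Free ℤ N := inferInstance
  let c := Module.Free.chooseBasis ℤ N
  have hcard : Fintype.card (Module.Free.ChooseBasisIndex ℤ N) = m := by
    rw [← Module.finrank_eq_card_chooseBasisIndex]; exact hN
  let f : (Fin m → ℤ) →ₗ[ℤ] (Fin m → ℚ) := (Algebra.linearMap ℤ ℚ).compLeft (Fin m)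
  have hf_apply : ∀ (v : Fin m → ℤ) (i : Fin m), f v i = (v i : ℚ) := by
    intro v i
    simp [f, LinearMap.compLeft, algebraMap_int_eq]
    rfl
  have hfinj : Function.Injective f := by
    intro x y h
    funext i
    have h2 := congrFun h i
    rw [hf_apply, hf_apply] at h2
    exact_mod_cast h2
  have hLIZ : LinearIndependent ℤ (fun i => f (c i : Fin m → ℤ)) := by
    have h0 : LinearIndependent ℤ (fun i => (c i : Fin m → ℤ)) :=
      c.linearIndependent.map' N.subtype (Submodule.ker_subtype N)
    exact h0.map' f (LinearMap.ker_eq_bot.mpr hfinj)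
  have hLIQ : LinearIndependent ℚ (fun i => f (c i : Fin m → ℤ)) :=
    (LinearIndependent.iff_fractionRing ℤ ℚ).mp hLIZ
  have himg : f '' Set.range Qᵀ = Set.range (Q.map (Int.cast : ℤ → ℚ))ᵀ := by
    rw [show f '' Set.range Qᵀ = Set.range (f ∘ Qᵀ) from (Set.range_comp _ _).symm]
    refine congrArg Set.range (funext fun j => funext fun i => ?_)
    show f (Qᵀ j) i = _
    rw [hf_apply]
    rfl
  have hmem : ∀ i, f (c i : Fin m → ℤ) ∈ S := by
    intro i
    have h1 : (c i : Fin m → ℤ) ∈ N := (c i).2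
    have h2 : f (c i : Fin m → ℤ) ∈ Submodule.map f (Submodule.span ℤ (Set.range Qᵀ)) :=
      Submodule.mem_map_of_mem h1
    rw [Submodule.map_span, himg] at h2
    exact Submodule.span_le_restrictScalars ℤ ℚ _ h2
  have hle : Submodule.span ℚ (Set.range fun i => f (c i : Fin m → ℤ)) ≤ S :=
    Submodule.span_le.mpr (Set.range_subset_iff.mpr hmem)
  have h1 : Module.finrank ℚ
      (Submodule.span ℚ (Set.range fun i => f (c i : Fin m → ℤ))) = m := by
    rw [finrank_span_eq_card hLIQ, hcard]
  have h2 : m ≤ Module.finrank ℚ S := by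
    exact le_of_eq_of_le h1.symm (Submodule.finrank_mono hle)
  have h3 : Module.finrank ℚ (Fin m → ℚ) = m := by simp
  apply Submodule.eq_top_of_finrank_eq
  rw [h3]
  exact le_antisymm (le_trans (Submodule.finrank_le S) h3.le) h2

private lemma zmod_li_to_rat {m n q : ℕ} [Fact q.Prime] (Q : Matrix (Fin m) (Fin n) ℤ)
    (s : Set (Fin n))
    (h : LinearIndependent (ZMod q) (fun j : s => fun i => ((Q i j.1 : ℤ) : ZMod q))) :
    LinearIndependent ℚ (fun j : s => fun i => ((Q i j.1 : ℤ) : ℚ)) := by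
  classical
  haveI : Fintype s := s.toFinite.fintype
  let f : (Fin m → ℤ) →ₗ[ℤ] (Fin m → ℚ) := (Algebra.linearMap ℤ ℚ).compLeft (Fin m)
  have hf_apply : ∀ (v : Fin m → ℤ) (i : Fin m), f v i = (v i : ℚ) := by
    intro v i
    simp [f, LinearMap.compLeft, algebraMap_int_eq]
    rfl
  have hfker : LinearMap.ker f = ⊥ := by
    rw [LinearMap.ker_eq_bot]
    intro x y hxy
    funext i
    have h2 := congrFun hxy i
    rw [hf_apply, hf_apply] at h2
    exact_mod_cast h2
  -- reduce to linear independence over ℤ of integer columns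
  have hv : LinearIndependent ℤ (fun j : s => (fun i => Q i j.1 : Fin m → ℤ)) := by
    by_contra hnot
    obtain ⟨g, hg, j0, hj0⟩ := Fintype.not_linearIndependent_iff.mp hnot
    obtain ⟨g', hg', hgcd1⟩ := Finset.extract_gcd g ⟨j0, Finset.mem_univ _⟩
    have hd0 : Finset.univ.gcd g ≠ 0 := fun h0 =>
      hj0 (Finset.gcd_eq_zero_iff.mp h0 j0 (Finset.mem_univ _))
    have hsum' : ∑ j : s, g' j • (fun i => Q i j.1 : Fin m → ℤ) = 0 := by
      have hd : Finset.univ.gcd g • ∑ j : s, g' j • (fun i => Q i j.1 : Fin m → ℤ) = 0 := by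
        rw [Finset.smul_sum]
        have he : ∀ j : s, Finset.univ.gcd g • g' j • (fun i => Q i j.1 : Fin m → ℤ)
            = g j • (fun i => Q i j.1 : Fin m → ℤ) := by
          intro j
          rw [smul_smul, ← hg' j (Finset.mem_univ _)]
        rw [Finset.sum_congr rfl fun j _ => he j]
        exact hg
      exact (smul_eq_zero.mp hd).resolve_left hd0
    have hzero := Fintype.linearIndependent_iff.mp h (fun j => ((g' j : ℤ) : ZMod q)) ?_
    · have hdvd : (q : ℤ) ∣ Finset.univ.gcd g' :=
        Finset.dvd_gcd fun j _ => (ZMod.intCast_zmod_eq_zero_iff_dvd _ _).mp (hzero j)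
      rw [hgcd1] at hdvd
      have hq1 : (q : ℤ) ≤ 1 := Int.le_of_dvd one_pos hdvd
      have := (Fact.out : q.Prime).two_le
      omega
    · funext i
      have hi : (∑ j : s, g' j * Q i j.1) = 0 := by
        have h2 := congrFun hsum' i
        simpa [Finset.sum_apply, Pi.smul_apply, smul_eq_mul] using h2
      have : ((∑ j : s, g' j * Q i j.1 : ℤ) : ZMod q) = 0 := by rw [hi]; simp
      rw [Finset.sum_apply]
      push_cast at this ⊢
      simpa [smul_eq_mul] using this
  rw [show (fun j : s => fun i => ((Q i j.1 : ℤ) : ℚ))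
      = f ∘ (fun j : s => (fun i => Q i j.1 : Fin m → ℤ)) from
    funext fun j => funext fun i => (hf_apply (fun i' => Q i' j.1) i).symm]
  exact (LinearIndependent.iff_fractionRing ℤ ℚ).mp (hv.map' f hfker)


/-- For a full row-rank integer matrix `Q ∈ ℤ^{m×n}` and an odd prime `q` with
`q > 1 + 2·√(det(Q·Qᵀ))`, the reduction of `Q` mod `q` represents the same matroid as `Q`:
a set of columns of `Q` is linearly independent over ℚ iff the corresponding columns of
`Q mod q` are linearly independent over `𝔽_q = ZMod q`. -/
theorem stmt_11 {m n : ℕ} (Q : Matrix (Fin m) (Fin n) ℤ) (hrank : Q.rank = m)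
    (q : ℕ) [Fact q.Prime] (hodd : Odd q)
    (hq : (1 : ℝ) + 2 * Real.sqrt (((Q * Q.transpose).det : ℤ) : ℝ) < (q : ℝ))
    (s : Set (Fin n)) :
    LinearIndependent ℚ (fun j : s => fun i => ((Q i j.1 : ℤ) : ℚ)) ↔
      LinearIndependent (ZMod q) (fun j : s => fun i => ((Q i j.1 : ℤ) : ZMod q)) := by

  classical
  constructor
  · intro hQ
    set A : Matrix (Fin m) (Fin n) ℚ := Q.map (Int.cast : ℤ → ℚ) with hAdef
    have hQ' : LinearIndependent ℚ (fun j : s => Aᵀ j.1) := hQ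
    have hinj : Function.Injective (fun j : s => Aᵀ j.1) := hQ'.injective
    have hspan : Submodule.span ℚ (Set.range Aᵀ) = ⊤ := span_cols_top Q hrank
    have hsetLI : LinearIndependent ℚ ((↑) : (Aᵀ '' s) → (Fin m → ℚ)) := by
      rw [show Aᵀ '' s = Set.range fun x : s => Aᵀ x from Set.image_eq_range _ _]
      exact hQ'.linearIndepOn_id
    obtain ⟨b, hbt, hsb, hspanb, hbLI⟩ :=
      exists_linearIndepOn_id_extension hsetLI (Set.image_subset_range Aᵀ s)
    have hbLI : LinearIndependent ℚ ((↑) : b → (Fin m → ℚ)) := hbLI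
    have hspanbtop : Submodule.span ℚ b = ⊤ := by
      rw [eq_top_iff, ← hspan]
      exact Submodule.span_le.mpr hspanb
    have hbfin : b.Finite := hbLI.set_finite_of_isNoetherian
    haveI : Fintype b := hbfin.fintype
    have hbbasis : Module.Basis b ℚ (Fin m → ℚ) :=
      Module.Basis.mk hbLI (by rw [Subtype.range_coe]; exact hspanbtop.ge)
    have hbcard : Fintype.card b = m := by
      have h1 := Module.finrank_eq_card_basis hbbasis
      simpa using h1.symm
    let e : Fin m ≃ b := (Fintype.equivFinOfCardEq hbcard).symm
    have hψ : ∀ x : b, ∃ j : Fin n, Aᵀ j = (x : Fin m → ℚ) := fun x => hbt x.2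
    choose ψ hψs using hψ
    let φ : Fin m → Fin n := fun i => ψ (e i)
    have hφA : ∀ i, Aᵀ (φ i) = ((e i : b) : Fin m → ℚ) := fun i => hψs (e i)
    have hφinj : Function.Injective φ := by
      intro i i' hii
      have h2 : ((e i : b) : Fin m → ℚ) = ((e i' : b) : Fin m → ℚ) := by
        rw [← hφA, ← hφA, hii]
      exact e.injective (Subtype.ext h2)
    have hLIe : LinearIndependent ℚ (fun i : Fin m => ((e i : b) : Fin m → ℚ)) :=
      hbLI.comp e e.injective
    set M : Matrix (Fin m) (Fin m) ℚ := A.submatrix id φ with hMdef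
    have hMcols : (fun i => Mᵀ i) = fun i : Fin m => ((e i : b) : Fin m → ℚ) :=
      funext fun i => hφA i
    have hMunit : IsUnit M.det :=
      (Matrix.isUnit_iff_isUnit_det M).mp
        (Matrix.linearIndependent_cols_iff_isUnit.mp (hMcols ▸ hLIe : LinearIndependent ℚ (fun i => Mᵀ i)))
    set D : ℤ := (Q.submatrix id φ).det with hDdef
    have hDcast : (D : ℚ) = M.det := by
      have h := RingHom.map_det (Int.castRingHom ℚ) (Q.submatrix id φ)
      have h2 : (Int.castRingHom ℚ).mapMatrix (Q.submatrix id φ) = M := rfl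
      rw [h2] at h
      exact h
    have hD0 : D ≠ 0 := by
      intro h0
      apply hMunit.ne_zero
      rw [← hDcast, h0, Int.cast_zero]
    have hb2 : D ^ 2 ≤ (Q * Qᵀ).det := minor_sq_le Q φ hφinj
    have habs : ((|D| : ℤ) : ℝ) ≤ Real.sqrt (((Q * Qᵀ).det : ℤ) : ℝ) := by
      rw [show ((|D| : ℤ) : ℝ) = |(D : ℝ)| by push_cast; rfl, ← Real.sqrt_sq_eq_abs]
      apply Real.sqrt_le_sqrt
      exact_mod_cast hb2
    have hqD : ¬ (q : ℤ) ∣ D := by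
      intro hdvd
      have h1 : (q : ℤ) ≤ |D| := Int.le_of_dvd (abs_pos.mpr hD0) ((dvd_abs _ _).mpr hdvd)
      have h2 : (q : ℝ) ≤ ((|D| : ℤ) : ℝ) := by exact_mod_cast h1
      nlinarith [Real.sqrt_nonneg (((Q * Qᵀ).det : ℤ) : ℝ), habs, hq]
    have hDq0 : ((D : ZMod q)) ≠ 0 := fun h0 =>
      hqD ((ZMod.intCast_zmod_eq_zero_iff_dvd _ _).mp h0)
    set R : Matrix (Fin m) (Fin n) (ZMod q) := Q.map (Int.cast : ℤ → ZMod q) with hRdef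
    set Mq : Matrix (Fin m) (Fin m) (ZMod q) := R.submatrix id φ with hMqdef
    have hMqdet : Mq.det = (D : ZMod q) := by
      have h := RingHom.map_det (Int.castRingHom (ZMod q)) (Q.submatrix id φ)
      have h2 : (Int.castRingHom (ZMod q)).mapMatrix (Q.submatrix id φ) = Mq := rfl
      rw [h2] at h
      exact h.symm
    have hLIq : LinearIndependent (ZMod q) (fun i => Mqᵀ i) :=
      Matrix.linearIndependent_cols_iff_isUnit.mpr
        ((Matrix.isUnit_iff_isUnit_det Mq).mpr
          (isUnit_iff_ne_zero.mpr (by rw [hMqdet]; exact hDq0)))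
    have hmem : ∀ j : s, Aᵀ j.1 ∈ b := fun j => hsb ⟨j.1, j.2, rfl⟩
    let g : s → Fin m := fun j => e.symm ⟨Aᵀ j.1, hmem j⟩
    have hgspec : ∀ j : s, Aᵀ (φ (g j)) = Aᵀ j.1 := by
      intro j
      rw [hφA]
      simp [g]
    have hginj : Function.Injective g := by
      intro j j' hgj
      apply hinj
      show Aᵀ j.1 = Aᵀ j'.1
      rw [← hgspec j, ← hgspec j', hgj]
    have hfinal := hLIq.comp g hginj
    have heq : ((fun i => Mqᵀ i) ∘ g) = fun j : s => fun i => ((Q i j.1 : ℤ) : ZMod q) := by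
      funext j
      funext i
      show ((Q i (φ (g j)) : ℤ) : ZMod q) = ((Q i j.1 : ℤ) : ZMod q)
      have h3 : ((Q i (φ (g j)) : ℤ) : ℚ) = ((Q i j.1 : ℤ) : ℚ) := congrFun (hgspec j) i
      have h4 : Q i (φ (g j)) = Q i j.1 := by exact_mod_cast h3
      rw [h4]
    rwa [heq] at hfinal
  · intro hZ
    exact zmod_li_to_rat Q s hZ
end

section
/- (Pinsker-type bounds) For jointly distributed random variables X and Y on finite alphabets, the mutual information I(X;Y) and the total-variation distance T(X;Y) = d_TV(P_{XY}, P_X × P_Y) satisfy: I(X;Y) ≥ 2·T(X;Y)² (in nats), and I(X;Y) ≤ log(min(|𝒳|,|𝒴|) − 1)·T(X;Y) + h_b(T(X;Y)), where h_b is the binary entropy function. -/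
open Real

noncomputable def phiP (r : ℝ) : ℝ := r * log r - r + 1 - (3/2) * (r-1)^2 / (r+2)
noncomputable def phiP' (r : ℝ) : ℝ := log r - (3/2) * ((r-1)*(r+5)) / (r+2)^2

lemma phiP_hasDeriv {r : ℝ} (hr : 0 < r) : HasDerivAt phiP (phiP' r) r := by
  have h2 : r + 2 ≠ 0 := by positivity
  have h1 := ((Real.hasDerivAt_mul_log hr.ne').sub (hasDerivAt_id r)).add_const 1
  have h3 := ((((hasDerivAt_id r).sub_const 1).pow 2).const_mul ((3:ℝ)/2)).div
      ((hasDerivAt_id r).add_const 2) h2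
  have h := h1.sub h3
  simp only [id] at h
  unfold phiP
  refine h.congr_deriv ?_
  simp only [Pi.pow_apply, Pi.mul_apply]
  unfold phiP'
  field_simp
  ring

lemma phiP'_hasDeriv {r : ℝ} (hr : 0 < r) : HasDerivAt phiP' (1/r - 27/(r+2)^3) r := by
  have h2 : r + 2 ≠ 0 := by positivity
  have h2' : ((r+2)^2 : ℝ) ≠ 0 := by positivity
  have h1 : HasDerivAt Real.log r⁻¹ r := Real.hasDerivAt_log hr.ne'
  have h3 := HasDerivAt.div
    ((((hasDerivAt_id r).sub_const 1).mul ((hasDerivAt_id r).add_const 5)).const_mul ((3:ℝ)/2))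
    (((hasDerivAt_id r).add_const 2).pow 2) h2'
  have h := h1.sub h3
  simp only [id] at h
  unfold phiP'
  refine h.congr_deriv ?_
  simp only [Pi.pow_apply, Pi.mul_apply]
  field_simp
  ring

lemma phiP_nonneg {r : ℝ} (hr : 0 < r) : 0 ≤ phiP r := by
  have hphi1 : phiP 1 = 0 := by norm_num [phiP]
  have hmono : MonotoneOn phiP' (Set.Ioi 0) := by
    refine monotoneOn_of_deriv_nonneg (convex_Ioi 0) ?_ ?_ ?_
    · exact fun x hx => ((phiP'_hasDeriv (by exact hx : (0:ℝ) < x)).continuousAt).continuousWithinAt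
    · intro x hx
      rw [interior_Ioi] at hx
      exact ((phiP'_hasDeriv hx).differentiableAt).differentiableWithinAt
    · intro x hx
      rw [interior_Ioi] at hx
      rw [(phiP'_hasDeriv hx).deriv]
      have h1 : (0:ℝ) < x := hx
      have key : 27 * x ≤ (x+2)^3 := by nlinarith [sq_nonneg (x-1), sq_nonneg (x+8)]
      have : 27/(x+2)^3 ≤ 1/x := by
        rw [div_le_div_iff₀ (by positivity) (by positivity)]
        nlinarith
      linarith
  have hphi'1 : phiP' 1 = 0 := by norm_num [phiP']
  have hphi'nonneg : ∀ x ∈ Set.Ici (1:ℝ), 0 ≤ phiP' x := by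
    intro x hx
    simp only [Set.mem_Ici] at hx
    have := hmono (by norm_num : (1:ℝ) ∈ Set.Ioi 0)
      (by simp; linarith : x ∈ Set.Ioi (0:ℝ)) hx
    linarith [hphi'1 ▸ this]
  have hphi'nonpos : ∀ x ∈ Set.Ioc (0:ℝ) 1, phiP' x ≤ 0 := by
    intro x hx
    have := hmono (hx.1 : x ∈ Set.Ioi 0) (by norm_num : (1:ℝ) ∈ Set.Ioi 0) hx.2
    linarith [hphi'1 ▸ this]
  rcases le_or_gt 1 r with h | h
  · have hm : MonotoneOn phiP (Set.Ici 1) := by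
      refine monotoneOn_of_deriv_nonneg (convex_Ici 1) ?_ ?_ ?_
      · intro x hx
        simp only [Set.mem_Ici] at hx
        exact ((phiP_hasDeriv (by linarith)).continuousAt).continuousWithinAt
      · intro x hx
        rw [interior_Ici] at hx
        exact ((phiP_hasDeriv (by simp at hx; linarith)).differentiableAt).differentiableWithinAt
      · intro x hx
        rw [interior_Ici] at hx
        simp only [Set.mem_Ioi] at hx
        rw [(phiP_hasDeriv (by linarith : (0:ℝ) < x)).deriv]
        exact hphi'nonneg x (le_of_lt hx)
    have := hm (by norm_num : (1:ℝ) ∈ Set.Ici 1) h h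
    linarith [hphi1 ▸ this]
  · have hm : AntitoneOn phiP (Set.Ioc 0 1) := by
      refine antitoneOn_of_deriv_nonpos (convex_Ioc 0 1) ?_ ?_ ?_
      · exact fun x hx => ((phiP_hasDeriv (hx.1)).continuousAt).continuousWithinAt
      · intro x hx
        rw [interior_Ioc] at hx
        exact ((phiP_hasDeriv hx.1).differentiableAt).differentiableWithinAt
      · intro x hx
        rw [interior_Ioc] at hx
        rw [(phiP_hasDeriv hx.1).deriv]
        exact hphi'nonpos x ⟨hx.1, le_of_lt hx.2⟩
    have := hm ⟨hr, h.le⟩ (by norm_num : (1:ℝ) ∈ Set.Ioc 0 1) h.le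
    linarith [hphi1 ▸ this]


lemma lemA {a b : ℝ} (ha : 0 ≤ a) (hb : 0 ≤ b) (hab : a ≠ 0 → b ≠ 0) :
    a - b + (3/2) * (a-b)^2/(a+2*b) ≤ a * Real.log (a/b) := by
  rcases eq_or_lt_of_le ha with h0 | hpos
  · rcases eq_or_lt_of_le hb with h0b | hbpos
    · simp [← h0, ← h0b]
    · rw [← h0]
      have : (0:ℝ) + 2*b ≠ 0 := by positivity
      rw [zero_mul]
      rw [zero_sub, neg_sq]
      have : (3:ℝ)/2 * b^2/(0+2*b) = (3/4)*b := by field_simp; ring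
      rw [this]
      linarith
  · have hbpos : 0 < b := hb.lt_of_ne (Ne.symm (hab hpos.ne'))
    have hr : 0 < a/b := by positivity
    have h := phiP_nonneg hr
    unfold phiP at h
    have hab2 : a + 2*b ≠ 0 := by positivity
    have e1 : (a/b) * log (a/b) - a/b + 1 - (3/2) * (a/b-1)^2 / (a/b+2)
        = (a * log (a/b) - a + b - (3/2)*(a-b)^2/(a+2*b)) / b := by
      field_simp
    rw [e1] at h
    have := (div_nonneg_iff.mp h)
    rcases this with ⟨h1, _⟩ | ⟨_, h2⟩
    · linarith
    · linarith

-- Pinsker lower bound, abstract version over a fintype index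
lemma pinsker_lower {ι : Type*} [Fintype ι] (f g : ι → ℝ)
    (hf : ∀ i, 0 ≤ f i) (hg : ∀ i, 0 ≤ g i)
    (hfg : ∀ i, f i ≠ 0 → g i ≠ 0)
    (hsf : ∑ i, f i = 1) (hsg : ∑ i, g i = 1) :
    2 * ((1/2) * ∑ i, |f i - g i|)^2 ≤ ∑ i, f i * Real.log (f i / g i) := by
  have key : ∀ i, f i - g i + (3/2) * (f i - g i)^2/(f i + 2*g i) ≤ f i * Real.log (f i / g i) :=
    fun i => lemA (hf i) (hg i) (hfg i)
  have h1 : ∑ i, (f i - g i) + (3/2) * ∑ i, (f i - g i)^2/(f i + 2*g i)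
      ≤ ∑ i, f i * Real.log (f i / g i) := by
    rw [Finset.mul_sum, ← Finset.sum_add_distrib]
    exact Finset.sum_le_sum (fun i _ => by simpa [mul_div_assoc] using key i)
  have h2 : ∑ i, (f i - g i) = 0 := by rw [Finset.sum_sub_distrib, hsf, hsg]; ring
  -- Cauchy-Schwarz
  have h3 : (∑ i, |f i - g i|)^2 ≤ (∑ i, (f i - g i)^2/(f i + 2*g i)) * (∑ i, (f i + 2*g i)) := by
    have := Finset.sum_mul_sq_le_sq_mul_sq Finset.univ
      (fun i => |f i - g i| / Real.sqrt (f i + 2*g i)) (fun i => Real.sqrt (f i + 2*g i))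
    have e : ∀ i : ι, |f i - g i| / Real.sqrt (f i + 2*g i) * Real.sqrt (f i + 2*g i) = |f i - g i| := by
      intro i
      rcases eq_or_lt_of_le (by linarith [hf i, hg i] : (0:ℝ) ≤ f i + 2*g i) with h0 | hp
      · have hfi : f i = 0 := by nlinarith [hf i, hg i]
        have hgi : g i = 0 := by nlinarith [hf i, hg i]
        simp [hfi, hgi]
      · have hs : Real.sqrt (f i + 2*g i) ≠ 0 := by
          simp [Real.sqrt_eq_zero']; linarith
        exact div_mul_cancel₀ _ hs
    have e2 : ∀ i : ι, (|f i - g i| / Real.sqrt (f i + 2*g i))^2 = (f i - g i)^2/(f i + 2*g i) := by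
      intro i
      rw [div_pow, sq_abs, Real.sq_sqrt (by linarith [hf i, hg i])]
    have e3 : ∀ i : ι, (Real.sqrt (f i + 2*g i))^2 = f i + 2*g i := fun i =>
      Real.sq_sqrt (by linarith [hf i, hg i])
    calc (∑ i, |f i - g i|)^2 = (∑ i, |f i - g i| / Real.sqrt (f i + 2*g i) * Real.sqrt (f i + 2*g i))^2 := by
          congr 1; exact Finset.sum_congr rfl (fun i _ => (e i).symm)
      _ ≤ (∑ i, (|f i - g i| / Real.sqrt (f i + 2*g i))^2) * (∑ i, (Real.sqrt (f i + 2*g i))^2) := this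
      _ = (∑ i, (f i - g i)^2/(f i + 2*g i)) * (∑ i, (f i + 2*g i)) := by
          congr 1
          · exact Finset.sum_congr rfl (fun i _ => e2 i)
          · exact Finset.sum_congr rfl (fun i _ => e3 i)
  have h4 : ∑ i, (f i + 2*g i) = 3 := by
    rw [Finset.sum_add_distrib, hsf, ← Finset.mul_sum, hsg]; norm_num
  rw [h4] at h3
  nlinarith [h3, h1, h2]


lemma maxent {ι : Type*} [DecidableEq ι] (s : Finset ι) (t : ι → ℝ) (ht : ∀ i ∈ s, 0 ≤ t i)
    (hsum : ∑ i ∈ s, t i = 1) : ∑ i ∈ s, negMulLog (t i) ≤ Real.log s.card := by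
  classical
  set s' := s.filter (fun i => t i ≠ 0) with hs'
  have hcard : (0:ℝ) < (s.card : ℝ) := by
    rcases Finset.eq_empty_or_nonempty s with h | h
    · rw [h] at hsum; simp at hsum
    · exact_mod_cast Finset.card_pos.mpr h
  have h1 : ∑ i ∈ s, negMulLog (t i) = ∑ i ∈ s', negMulLog (t i) := by
    rw [hs']
    rw [Finset.sum_filter_of_ne]
    intro i _ h h0
    exact h (by simp [h0])
  have h2 : ∑ i ∈ s', t i = 1 := by
    rw [hs', Finset.sum_filter_ne_zero, hsum]
  have key : ∀ i ∈ s', negMulLog (t i) ≤ t i * Real.log s.card + (1/s.card - t i) := by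
    intro i hi
    rw [hs', Finset.mem_filter] at hi
    have hti : 0 < t i := (ht i hi.1).lt_of_ne (Ne.symm hi.2)
    have hx : (0:ℝ) < 1/(t i * s.card) := by positivity
    have hlog := Real.log_le_sub_one_of_pos hx
    have e : Real.log (1/(t i * s.card)) = - Real.log (t i) - Real.log s.card := by
      rw [one_div, Real.log_inv, Real.log_mul hti.ne' hcard.ne']
      ring
    rw [e] at hlog
    have e2 : (1:ℝ)/(t i * s.card) - 1 = 1/(t i * s.card) - 1 := rfl
    have : negMulLog (t i) - t i * Real.log s.card = t i * (- Real.log (t i) - Real.log s.card) := by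
      simp [negMulLog]; ring
    have hb : t i * (- Real.log (t i) - Real.log s.card) ≤ t i * (1/(t i * s.card) - 1) :=
      mul_le_mul_of_nonneg_left hlog hti.le
    have e3 : t i * (1/(t i * s.card) - 1) = 1/s.card - t i := by
      field_simp
    linarith
  have hsub : (s'.card : ℝ) ≤ s.card := by
    exact_mod_cast Finset.card_le_card (Finset.filter_subset _ _)
  calc ∑ i ∈ s, negMulLog (t i) = ∑ i ∈ s', negMulLog (t i) := h1
    _ ≤ ∑ i ∈ s', (t i * Real.log s.card + (1/s.card - t i)) := Finset.sum_le_sum key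
    _ = (∑ i ∈ s', t i) * Real.log s.card + (s'.card / s.card - ∑ i ∈ s', t i) := by
        rw [Finset.sum_add_distrib, Finset.sum_sub_distrib, ← Finset.sum_mul]
        simp [Finset.sum_const, div_eq_mul_inv, mul_comm]
    _ = Real.log s.card + (s'.card/s.card - 1) := by rw [h2]; ring
    _ ≤ Real.log s.card := by
        have : (s'.card : ℝ)/s.card ≤ 1 := by
          rw [div_le_one hcard]; exact hsub
        linarith

-- scaling / chain identity
lemma chainId {ι : Type*} (s : Finset ι) (w : ι → ℝ) (hw : ∀ i ∈ s, 0 ≤ w i) :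
    ∑ i ∈ s, negMulLog (w i)
      = (∑ i ∈ s, w i) * ∑ i ∈ s, negMulLog (w i / (∑ i ∈ s, w i))
        + negMulLog (∑ i ∈ s, w i) := by
  set c := ∑ i ∈ s, w i with hc
  rcases eq_or_lt_of_le (Finset.sum_nonneg hw) with h0 | hpos
  · have : ∀ i ∈ s, w i = 0 := by
      intro i hi
      exact ((Finset.sum_eq_zero_iff_of_nonneg hw).mp h0.symm) i hi
    have hz : ∀ i ∈ s, negMulLog (w i) = 0 := fun i hi => by rw [this i hi, negMulLog_zero]
    rw [Finset.sum_congr rfl hz]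
    rw [hc, ← h0]
    simp
  · have e : ∀ i ∈ s, negMulLog (w i) = (w i / c) * negMulLog c + c * negMulLog (w i / c) := by
      intro i hi
      have : w i = c * (w i / c) := (mul_div_cancel₀ _ hpos.ne').symm
      conv_lhs => rw [this]
      rw [negMulLog_mul]
    rw [Finset.sum_congr rfl e, Finset.sum_add_distrib, ← Finset.sum_mul, ← Finset.mul_sum,
      ← Finset.sum_div, ← hc, div_self hpos.ne']
    ring


-- superadditivity: entropy of a sum vs sum of entropies
lemma negMulLog_sum_le {ι : Type*} (s : Finset ι) (w : ι → ℝ) (hw : ∀ i ∈ s, 0 ≤ w i) :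
    negMulLog (∑ i ∈ s, w i) ≤ ∑ i ∈ s, negMulLog (w i) := by
  set S := ∑ i ∈ s, w i with hS
  have hS0 : 0 ≤ S := Finset.sum_nonneg hw
  have e : negMulLog S = ∑ i ∈ s, w i * (-Real.log S) := by
    rw [← Finset.sum_mul, ← hS]; simp [negMulLog]
  rw [e]
  refine Finset.sum_le_sum (fun i hi => ?_)
  rcases eq_or_lt_of_le (hw i hi) with h0 | hpos
  · simp [← h0]
  · have hle : w i ≤ S := Finset.single_le_sum hw hi
    have : Real.log (w i) ≤ Real.log S := Real.log_le_log hpos hle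
    have : w i * (-Real.log S) ≤ w i * (-Real.log (w i)) := by
      apply mul_le_mul_of_nonneg_left (by linarith) hpos.le
    simpa [negMulLog, neg_mul, mul_comm] using this

-- binary entropy function concavity
noncomputable def hb (t : ℝ) : ℝ := negMulLog t + negMulLog (1 - t)

lemma hb_concave : ConcaveOn ℝ (Set.Icc (0:ℝ) 1) hb := by
  have h1 : ConcaveOn ℝ (Set.Icc (0:ℝ) 1) negMulLog :=
    Real.concaveOn_negMulLog.subset (fun x hx => hx.1) (convex_Icc 0 1)
  have h2 : ConcaveOn ℝ (Set.Icc (0:ℝ) 1) (fun t => negMulLog (1 - t)) := by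
    have hcomp := h1.comp_affineMap (AffineMap.lineMap (1:ℝ) (0:ℝ))
    have hset : (⇑(AffineMap.lineMap (1:ℝ) (0:ℝ)) ⁻¹' Set.Icc 0 1) = Set.Icc (0:ℝ) 1 := by
      ext x
      simp only [Set.mem_preimage, AffineMap.lineMap_apply, Set.mem_Icc]
      constructor <;> intro h <;> constructor <;>
        [skip; skip; skip; skip] <;>
        simp only [vsub_eq_sub, vadd_eq_add, smul_eq_mul] at * <;> nlinarith [h.1, h.2]
    have hfun : (negMulLog ∘ ⇑(AffineMap.lineMap (1:ℝ) (0:ℝ))) = (fun t => negMulLog (1 - t)) := by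
      ext x
      simp only [Function.comp_apply, AffineMap.lineMap_apply, vsub_eq_sub, vadd_eq_add,
        smul_eq_mul]
      ring_nf
    rw [hset, hfun] at hcomp
    exact hcomp
  exact h1.add h2

-- Jensen for hb
lemma hb_jensen {ι : Type*} (s : Finset ι) (w d : ι → ℝ) (hw : ∀ i ∈ s, 0 ≤ w i)
    (hw1 : ∑ i ∈ s, w i = 1) (hd : ∀ i ∈ s, d i ∈ Set.Icc (0:ℝ) 1) :
    ∑ i ∈ s, w i * hb (d i) ≤ hb (∑ i ∈ s, w i * d i) := by
  have := hb_concave.le_map_sum hw hw1 hd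
  simpa using this

lemma grouping {ι : Type*} [Fintype ι] [DecidableEq ι] (w : ι → ℝ) (hw : ∀ i, 0 ≤ w i)
    (hsum : ∑ i, w i = 1) (y0 : ι) :
    ∑ i, negMulLog (w i)
      ≤ hb (1 - w y0) + (1 - w y0) * Real.log ((Fintype.card ι - 1 : ℕ)) := by
  classical
  set e := Finset.univ.erase y0 with he
  have hα : ∑ i ∈ e, w i = 1 - w y0 := by
    have := Finset.add_sum_erase Finset.univ w (Finset.mem_univ y0)
    rw [← he] at this
    linarith [hsum ▸ this]
  set α := 1 - w y0 with hαdef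
  have hsplit : ∑ i, negMulLog (w i) = negMulLog (w y0) + ∑ i ∈ e, negMulLog (w i) := by
    rw [he, Finset.add_sum_erase Finset.univ (fun i => negMulLog (w i)) (Finset.mem_univ y0)]
  have hchain := chainId e w (fun i _ => hw i)
  rw [hα] at hchain
  have hcard : ((e.card : ℕ) : ℝ) = ((Fintype.card ι - 1 : ℕ) : ℝ) := by
    rw [he, Finset.card_erase_of_mem (Finset.mem_univ y0), Finset.card_univ]
  have hαnn : 0 ≤ α := by
    rw [← hα]; exact Finset.sum_nonneg (fun i _ => hw i)
  rcases eq_or_lt_of_le hαnn with h0 | hpos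
  · -- α = 0
    have hz : ∀ i ∈ e, w i = 0 := by
      intro i hi
      exact (Finset.sum_eq_zero_iff_of_nonneg (fun i _ => hw i)).mp (by rw [hα, ← h0]) i hi
    have : ∑ i ∈ e, negMulLog (w i) = 0 :=
      Finset.sum_eq_zero (fun i hi => by rw [hz i hi, negMulLog_zero])
    rw [hsplit, this]
    have hw0 : w y0 = 1 := by rw [hαdef] at h0; linarith
    simp [hw0, hb, ← h0]
  · have hmax : ∑ i ∈ e, negMulLog (w i / α) ≤ Real.log ((Fintype.card ι - 1 : ℕ)) := by
      rw [← hcard]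
      apply maxent e _ (fun i _ => div_nonneg (hw i) hpos.le)
      rw [← Finset.sum_div, hα]
      exact div_self hpos.ne'
    rw [hsplit, hchain]
    have h1α : 1 - α = w y0 := by rw [hαdef]; ring
    have hby : hb α = negMulLog α + negMulLog (w y0) := by rw [hb, h1α]
    have hmul : α * ∑ i ∈ e, negMulLog (w i / α) ≤ α * Real.log ((Fintype.card ι - 1 : ℕ)) :=
      mul_le_mul_of_nonneg_left hmax hpos.le
    linarith [hby, hmul]


lemma fannes {ι : Type*} [Fintype ι] [DecidableEq ι] (u v : ι → ℝ)
    (hu : ∀ i, 0 ≤ u i) (hv : ∀ i, 0 ≤ v i) (hsu : ∑ i, u i = 1) (hsv : ∑ i, v i = 1) :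
    ∑ i, negMulLog (u i) - ∑ i, negMulLog (v i)
      ≤ Real.log ((Fintype.card ι - 1 : ℕ)) * ((1/2) * ∑ i, |u i - v i|)
        + hb ((1/2) * ∑ i, |u i - v i|) := by
  classical
  set δ := (1/2) * ∑ i, |u i - v i| with hδ
  set m : ι → ℝ := fun i => min (u i) (v i) with hm
  set a : ι → ℝ := fun i => u i - m i with ha
  set b : ι → ℝ := fun i => v i - m i with hbdef
  have hann : ∀ i, 0 ≤ a i := fun i => by simp [ha, hm]
  have hbnn : ∀ i, 0 ≤ b i := fun i => by simp [hbdef, hm]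
  have hab0 : ∀ i, a i * b i = 0 := by
    intro i
    rcases min_cases (u i) (v i) with ⟨h1, _⟩ | ⟨h1, _⟩
    · have : a i = 0 := by simp [ha, hm, h1]
      rw [this, zero_mul]
    · have : b i = 0 := by simp [hbdef, hm, h1]
      rw [this, mul_zero]
  have habs : ∀ i, a i + b i = |u i - v i| := by
    intro i
    rcases le_total (u i) (v i) with h | h
    · rw [abs_of_nonpos (by linarith)]
      simp only [ha, hbdef, hm, min_eq_left h]
      ring
    · rw [abs_of_nonneg (by linarith)]
      simp only [ha, hbdef, hm, min_eq_right h]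
      ring
  have hsuma : ∑ i, a i = δ := by
    have h1 : ∑ i, a i - ∑ i, b i = 0 := by
      rw [← Finset.sum_sub_distrib]
      have : ∀ i ∈ Finset.univ, a i - b i = u i - v i := by
        intro i _; simp [ha, hbdef]
      rw [Finset.sum_congr rfl this, Finset.sum_sub_distrib, hsu, hsv, sub_self]
    have h2 : ∑ i, a i + ∑ i, b i = 2 * δ := by
      rw [← Finset.sum_add_distrib, Finset.sum_congr rfl (fun i _ => habs i), hδ]
      ring
    linarith
  have hsumb : ∑ i, b i = δ := by
    have h2 : ∑ i, a i + ∑ i, b i = 2 * δ := by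
      rw [← Finset.sum_add_distrib, Finset.sum_congr rfl (fun i _ => habs i), hδ]
      ring
    linarith
  have hδnn : 0 ≤ δ := by
    rw [← hsuma]; exact Finset.sum_nonneg (fun i _ => hann i)
  rcases eq_or_lt_of_le hδnn with h0 | hδpos
  · -- δ = 0 : u = v
    have huv : ∀ i, u i = v i := by
      intro i
      have hz : ∑ i, |u i - v i| = 0 := by
        have : (2:ℝ) * δ = ∑ i, |u i - v i| := by rw [hδ]; ring
        rw [← this, ← h0]; ring
      have := (Finset.sum_eq_zero_iff_of_nonneg
        (fun i _ => abs_nonneg (u i - v i))).mp hz i (Finset.mem_univ i)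
      have := abs_eq_zero.mp this
      linarith
    have : ∑ i, negMulLog (u i) = ∑ i, negMulLog (v i) :=
      Finset.sum_congr rfl (fun i _ => by rw [huv i])
    rw [this, ← h0]
    simp [hb]
  · -- δ > 0 : maximal coupling
    set pp : ι → ι → ℝ := fun x y => if x = y then m x else a x * b y / δ with hpp
    have hppnn : ∀ x y, 0 ≤ pp x y := by
      intro x y
      rw [hpp]
      dsimp only
      split
      · simp only [hm, le_min_iff, le_inf_iff]; exact ⟨hu x, hv x⟩
      · exact div_nonneg (mul_nonneg (hann x) (hbnn y)) hδnn
    have hrow : ∀ x, ∑ y, pp x y = u x := by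
      intro x
      rw [← Finset.add_sum_erase Finset.univ _ (Finset.mem_univ x)]
      have e1 : pp x x = m x := by simp [hpp]
      have e2 : ∀ y ∈ Finset.univ.erase x, pp x y = a x * b y / δ := by
        intro y hy
        have : x ≠ y := fun h => (Finset.mem_erase.mp hy).1 h.symm
        simp [hpp, this]
      rw [e1, Finset.sum_congr rfl e2]
      have e3 : ∑ y ∈ Finset.univ.erase x, a x * b y / δ = a x * (δ - b x) / δ := by
        rw [← Finset.sum_div, ← Finset.mul_sum]
        congr 2
        have := Finset.add_sum_erase Finset.univ b (Finset.mem_univ x)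
        rw [hsumb] at this
        linarith
      rw [e3]
      have : a x * (δ - b x) = a x * δ := by
        linear_combination (-1 : ℝ) * hab0 x
      rw [this, mul_div_assoc, div_self hδpos.ne', mul_one]
      simp [ha]
    have hcol : ∀ y, ∑ x, pp x y = v y := by
      intro y
      rw [← Finset.add_sum_erase Finset.univ _ (Finset.mem_univ y)]
      have e1 : pp y y = m y := by simp [hpp]
      have e2 : ∀ x ∈ Finset.univ.erase y, pp x y = a x * b y / δ := by
        intro x hx
        have : x ≠ y := (Finset.mem_erase.mp hx).1
        simp [hpp, this]
      rw [e1, Finset.sum_congr rfl e2]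
      have e3 : ∑ x ∈ Finset.univ.erase y, a x * b y / δ = (δ - a y) * b y / δ := by
        rw [← Finset.sum_div, ← Finset.sum_mul]
        congr 2
        have := Finset.add_sum_erase Finset.univ a (Finset.mem_univ y)
        rw [hsuma] at this
        linarith
      rw [e3]
      have : (δ - a y) * b y = δ * b y := by
        linear_combination (-1 : ℝ) * hab0 y
      rw [this, mul_comm δ (b y), mul_div_assoc, div_self hδpos.ne', mul_one]
      simp [hbdef]
    -- Step 1 : H(u) ≤ H(π)
    have step1 : ∑ x, negMulLog (u x) ≤ ∑ x, ∑ y, negMulLog (pp x y) := by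
      apply Finset.sum_le_sum
      intro x _
      rw [← hrow x]
      exact negMulLog_sum_le _ _ (fun y _ => hppnn x y)
    -- Step 2 : chain rule on columns
    have step2 : ∑ x, ∑ y, negMulLog (pp x y)
        = ∑ y, (v y * ∑ x, negMulLog (pp x y / v y) + negMulLog (v y)) := by
      rw [Finset.sum_comm]
      apply Finset.sum_congr rfl
      intro y _
      have := chainId Finset.univ (fun x => pp x y) (fun x _ => hppnn x y)
      rw [hcol y] at this
      exact this
    -- Step 3 : per-column bound
    set β : ι → ℝ := fun y => b y / v y with hβ
    have hβmem : ∀ y, β y ∈ Set.Icc (0:ℝ) 1 := by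
      intro y
      constructor
      · exact div_nonneg (hbnn y) (hv y)
      · rcases eq_or_lt_of_le (hv y) with h0 | hp
        · simp [hβ, ← h0]
        · rw [hβ]
          dsimp only
          rw [div_le_one hp]
          have h1 : 0 ≤ m y := le_min (hu y) (hv y)
          have : b y = v y - m y := by rw [hbdef]
          linarith
    have hvβ : ∀ y, v y * β y = b y := by
      intro y
      rcases eq_or_lt_of_le (hv y) with h0 | hp
      · have hm0 : m y = 0 := le_antisymm ((min_le_right (u y) (v y)).trans h0.ge)
          (le_min (hu y) (hv y))
        have hb0 : b y = 0 := by
          have : b y = v y - m y := by rw [hbdef]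
          rw [this, hm0, ← h0]; ring
        rw [hb0, ← h0, zero_mul]
      · rw [hβ]; field_simp
    have step3 : ∀ y, v y * ∑ x, negMulLog (pp x y / v y)
        ≤ v y * hb (β y) + b y * Real.log ((Fintype.card ι - 1 : ℕ)) := by
      intro y
      rcases eq_or_lt_of_le (hv y) with h0 | hp
      · have hpp0 : ∀ x, pp x y = 0 := by
          intro x
          have := hcol y
          have hcolnn : ∀ x ∈ Finset.univ, 0 ≤ pp x y := fun x _ => hppnn x y
          exact (Finset.sum_eq_zero_iff_of_nonneg hcolnn).mp (by rw [hcol y, ← h0]) x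
            (Finset.mem_univ x)
        have hm0 : m y = 0 := le_antisymm ((min_le_right (u y) (v y)).trans h0.ge)
          (le_min (hu y) (hv y))
        have hb0 : b y = 0 := by
          have : b y = v y - m y := by rw [hbdef]
          rw [this, hm0, ← h0]; ring
        rw [← h0, hb0]
        simp
      · -- v y > 0
        have hpmf : ∑ x, pp x y / v y = 1 := by
          rw [← Finset.sum_div, hcol y, div_self hp.ne']
        have hgr := grouping (fun x => pp x y / v y) (fun x => div_nonneg (hppnn x y) (hv y))
          hpmf y
        have hdiag : pp y y / v y = 1 - β y := by
          have : pp y y = m y := by simp [hpp]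
          rw [this, hβ]
          dsimp only
          rw [eq_sub_iff_add_eq, ← add_div]
          have : m y + b y = v y := by rw [hbdef]; ring
          rw [this, div_self hp.ne']
        rw [hdiag] at hgr
        have e : 1 - (1 - β y) = β y := by ring
        rw [e] at hgr
        have := mul_le_mul_of_nonneg_left hgr hp.le
        calc v y * ∑ x, negMulLog (pp x y / v y)
            ≤ v y * (hb (β y) + β y * Real.log ((Fintype.card ι - 1 : ℕ))) := this
          _ = v y * hb (β y) + (v y * β y) * Real.log ((Fintype.card ι - 1 : ℕ)) := by ring
          _ = v y * hb (β y) + b y * Real.log ((Fintype.card ι - 1 : ℕ)) := by rw [hvβ y]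
    -- assemble
    have step4 : ∑ y, v y * ∑ x, negMulLog (pp x y / v y)
        ≤ hb δ + δ * Real.log ((Fintype.card ι - 1 : ℕ)) := by
      calc ∑ y, v y * ∑ x, negMulLog (pp x y / v y)
          ≤ ∑ y, (v y * hb (β y) + b y * Real.log ((Fintype.card ι - 1 : ℕ))) :=
            Finset.sum_le_sum (fun y _ => step3 y)
        _ = (∑ y, v y * hb (β y)) + δ * Real.log ((Fintype.card ι - 1 : ℕ)) := by
            rw [Finset.sum_add_distrib, ← Finset.sum_mul, hsumb]
        _ ≤ hb δ + δ * Real.log ((Fintype.card ι - 1 : ℕ)) := by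
            have hj := hb_jensen Finset.univ v β (fun y _ => hv y) hsv
              (fun y _ => hβmem y)
            have : ∑ y, v y * β y = δ := by
              rw [Finset.sum_congr rfl (fun y _ => hvβ y), hsumb]
            rw [this] at hj
            linarith
    have final : ∑ x, negMulLog (u x) - ∑ y, negMulLog (v y)
        ≤ hb δ + δ * Real.log ((Fintype.card ι - 1 : ℕ)) := by
      have := step1
      rw [step2] at this
      rw [Finset.sum_add_distrib] at this
      linarith [step4]
    linarith [final]


lemma upper_asym {X Y : Type} [Fintype X] [Fintype Y]
    (p : X → Y → ℝ) (hp : ∀ x y, 0 ≤ p x y) (hsum : ∑ x, ∑ y, p x y = 1) :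
    ∑ x, ∑ y, p x y * Real.log (p x y / ((∑ y', p x y') * (∑ x', p x' y)))
      ≤ Real.log ((Fintype.card X - 1 : ℕ))
          * ((1/2) * ∑ x, ∑ y, |p x y - (∑ y', p x y') * (∑ x', p x' y)|)
        + hb ((1/2) * ∑ x, ∑ y, |p x y - (∑ y', p x y') * (∑ x', p x' y)|) := by
  classical
  set pX : X → ℝ := fun x => ∑ y, p x y with hpX
  set pY : Y → ℝ := fun y => ∑ x, p x y with hpY
  have hpXnn : ∀ x, 0 ≤ pX x := fun x => Finset.sum_nonneg (fun y _ => hp x y)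
  have hpYnn : ∀ y, 0 ≤ pY y := fun y => Finset.sum_nonneg (fun x _ => hp x y)
  have hsumY : ∑ y, pY y = 1 := by
    rw [hpY]; rw [Finset.sum_comm]; exact hsum
  have hsumX : ∑ x, pX x = 1 := hsum
  have hple : ∀ x y, p x y ≤ pX x := fun x y =>
    Finset.single_le_sum (fun y' _ => hp x y') (Finset.mem_univ y)
  have hpleY : ∀ x y, p x y ≤ pY y := fun x y =>
    Finset.single_le_sum (fun x' _ => hp x' y) (Finset.mem_univ x)
  set v : Y → X → ℝ := fun y x => p x y / pY y with hv
  set Hx : ℝ := ∑ x, negMulLog (pX x) with hHx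
  set Hv : Y → ℝ := fun y => ∑ x, negMulLog (v y x) with hHv
  set Δ : Y → ℝ := fun y => (1/2) * ∑ x, |pX x - v y x| with hΔ
  set T : ℝ := (1/2) * ∑ x, ∑ y, |p x y - pX x * pY y| with hT
  -- identity: I = ∑_y pY y * (Hx - Hv y)
  have idA : ∑ x, ∑ y, p x y * Real.log (p x y / (pX x * pY y))
      = Hx + (∑ y, negMulLog (pY y)) - ∑ x, ∑ y, negMulLog (p x y) := by
    have per : ∀ x y, p x y * Real.log (p x y / (pX x * pY y))
        = -negMulLog (p x y) + p x y * (-Real.log (pX x)) + p x y * (-Real.log (pY y)) := by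
      intro x y
      rcases eq_or_lt_of_le (hp x y) with h0 | hpos
      · rw [← h0]; simp
      · have hx : 0 < pX x := lt_of_lt_of_le hpos (hple x y)
        have hy : 0 < pY y := lt_of_lt_of_le hpos (hpleY x y)
        rw [Real.log_div hpos.ne' (by positivity), Real.log_mul hx.ne' hy.ne']
        simp [negMulLog]
        ring
    rw [Finset.sum_congr rfl (fun x _ => Finset.sum_congr rfl (fun y _ => per x y))]
    have e1 : ∀ x, ∑ y, (-negMulLog (p x y) + p x y * (-Real.log (pX x))
        + p x y * (-Real.log (pY y)))
        = (∑ y, -negMulLog (p x y)) + negMulLog (pX x) + ∑ y, p x y * (-Real.log (pY y)) := by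
      intro x
      rw [Finset.sum_add_distrib, Finset.sum_add_distrib]
      congr 1
      congr 1
      rw [← Finset.sum_mul]
      simp [negMulLog, hpX]
    rw [Finset.sum_congr rfl (fun x _ => e1 x)]
    rw [Finset.sum_add_distrib, Finset.sum_add_distrib]
    have e2 : ∑ x, ∑ y, p x y * (-Real.log (pY y)) = ∑ y, negMulLog (pY y) := by
      rw [Finset.sum_comm]
      apply Finset.sum_congr rfl
      intro y _
      rw [← Finset.sum_mul]
      simp [negMulLog, hpY]
    rw [e2]
    have e3 : ∑ x, ∑ y, -negMulLog (p x y) = -∑ x, ∑ y, negMulLog (p x y) := by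
      simp [Finset.sum_neg_distrib]
    rw [e3]
    ring
  have idB : ∑ x, ∑ y, negMulLog (p x y)
      = ∑ y, (pY y * Hv y + negMulLog (pY y)) := by
    rw [Finset.sum_comm]
    apply Finset.sum_congr rfl
    intro y _
    exact chainId Finset.univ (fun x => p x y) (fun x _ => hp x y)
  have idI : ∑ x, ∑ y, p x y * Real.log (p x y / (pX x * pY y))
      = ∑ y, pY y * (Hx - Hv y) := by
    rw [idA, idB, Finset.sum_add_distrib]
    have : ∑ y, pY y * (Hx - Hv y) = (∑ y, pY y) * Hx - ∑ y, pY y * Hv y := by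
      rw [Finset.sum_mul, ← Finset.sum_sub_distrib]
      exact Finset.sum_congr rfl (fun y _ => by ring)
    rw [this, hsumY]
    ring
  -- per-y bound
  have hvnn : ∀ y x, 0 ≤ v y x := fun y x => div_nonneg (hp x y) (hpYnn y)
  have hvsum : ∀ y, 0 < pY y → ∑ x, v y x = 1 := by
    intro y hy
    rw [hv]
    dsimp only
    rw [← Finset.sum_div]
    have e : ∑ i, p i y = pY y := rfl
    rw [e]
    exact div_self hy.ne'
  have perY : ∀ y, pY y * (Hx - Hv y)
      ≤ pY y * (Real.log ((Fintype.card X - 1 : ℕ)) * Δ y + hb (Δ y)) := by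
    intro y
    rcases eq_or_lt_of_le (hpYnn y) with h0 | hpos
    · rw [← h0, zero_mul, zero_mul]
    · apply mul_le_mul_of_nonneg_left _ hpos.le
      have := fannes pX (v y) hpXnn (hvnn y) hsumX (hvsum y hpos)
      have hΔy : Δ y = (1/2) * ∑ x, |pX x - v y x| := rfl
      have hHxe : Hx = ∑ x, negMulLog (pX x) := rfl
      have hHve : Hv y = ∑ x, negMulLog (v y x) := rfl
      rw [hΔy, hHxe, hHve]
      linarith [this]
  -- Δ sums to T
  have hTeq : ∑ y, pY y * Δ y = T := by
    have per : ∀ y, pY y * Δ y = (1/2) * ∑ x, |p x y - pX x * pY y| := by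
      intro y
      rcases eq_or_lt_of_le (hpYnn y) with h0 | hpos
      · have hz : ∀ x, p x y = 0 := by
          intro x
          have := hpleY x y
          have := hp x y
          linarith [h0]
        rw [← h0, zero_mul]
        have : ∀ x, |p x y - pX x * 0| = 0 := by
          intro x; rw [hz x]; simp
        rw [Finset.sum_congr rfl (fun x _ => by rw [hz x]; simp : ∀ x ∈ Finset.univ, |p x y - pX x * 0| = (0:ℝ))]
        simp
      · rw [hΔ]
        dsimp only
        rw [← mul_assoc, mul_comm (pY y) (1/2), mul_assoc, Finset.mul_sum]
        congr 1
        apply Finset.sum_congr rfl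
        intro x _
        have e0 : pY y * |pX x - v y x| = |pY y * (pX x - v y x)| := by
          rw [abs_mul, abs_of_pos hpos]
        rw [e0]
        have e : pY y * (pX x - v y x) = pX x * pY y - p x y := by
          rw [hv]; dsimp only
          rw [mul_sub]
          have : pY y * (p x y / pY y) = p x y := by field_simp
          rw [this]; ring
        rw [e, abs_sub_comm]
    rw [Finset.sum_congr rfl (fun y _ => per y), ← Finset.mul_sum, hT, Finset.sum_comm]
  -- Jensen
  have hΔmem : ∀ y, Δ y ∈ Set.Icc (0:ℝ) 1 := by
    intro y
    constructor
    · rw [hΔ]; dsimp only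
      have : (0:ℝ) ≤ ∑ x, |pX x - v y x| := Finset.sum_nonneg (fun x _ => abs_nonneg _)
      linarith
    · rw [hΔ]; dsimp only
      have hbd : ∀ x, |pX x - v y x| ≤ pX x + v y x := by
        intro x
        have := abs_sub (pX x) (v y x)
        calc |pX x - v y x| ≤ |pX x| + |v y x| := abs_sub _ _
          _ = pX x + v y x := by rw [abs_of_nonneg (hpXnn x), abs_of_nonneg (hvnn y x)]
      have hsv : ∑ x, v y x ≤ 1 := by
        rcases eq_or_lt_of_le (hpYnn y) with h0 | hpos
        · have : ∀ x, v y x = 0 := by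
            intro x; rw [hv]; dsimp only; rw [← h0]; simp
          rw [Finset.sum_congr rfl (fun x _ => this x)]
          simp
        · rw [hvsum y hpos]
      have : ∑ x, |pX x - v y x| ≤ 2 := by
        calc ∑ x, |pX x - v y x| ≤ ∑ x, (pX x + v y x) := Finset.sum_le_sum (fun x _ => hbd x)
          _ = (∑ x, pX x) + ∑ x, v y x := Finset.sum_add_distrib
          _ ≤ 2 := by rw [hsumX]; linarith
      linarith
  have jensen : ∑ y, pY y * hb (Δ y) ≤ hb T := by
    have := hb_jensen Finset.univ pY Δ (fun y _ => hpYnn y) hsumY (fun y _ => hΔmem y)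
    rw [hTeq] at this
    exact this
  -- final chain
  calc ∑ x, ∑ y, p x y * Real.log (p x y / (pX x * pY y))
      = ∑ y, pY y * (Hx - Hv y) := idI
    _ ≤ ∑ y, pY y * (Real.log ((Fintype.card X - 1 : ℕ)) * Δ y + hb (Δ y)) :=
        Finset.sum_le_sum (fun y _ => perY y)
    _ = Real.log ((Fintype.card X - 1 : ℕ)) * (∑ y, pY y * Δ y) + ∑ y, pY y * hb (Δ y) := by
        rw [Finset.mul_sum, ← Finset.sum_add_distrib]
        apply Finset.sum_congr rfl
        intro y _
        ring
    _ ≤ Real.log ((Fintype.card X - 1 : ℕ)) * T + hb T := by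
        rw [hTeq]
        linarith [jensen]


/-- Pinsker-type bounds for finite alphabets.  For a joint pmf `p` on `X × Y` with
marginals `pX`, `pY`, total-variation distance `T = d_TV(P_{XY}, P_X × P_Y)` (equal to
half the ℓ¹ distance) and mutual information `I(X;Y)` in nats, we have
`I ≥ 2·T²` and `I ≤ log(min(|X|,|Y|) − 1)·T + h_b(T)`. -/
theorem stmt_15 {X Y : Type} [Fintype X] [Fintype Y]
    (p : X → Y → ℝ) (hp : ∀ x y, 0 ≤ p x y) (hsum : ∑ x, ∑ y, p x y = 1) :
    let pX : X → ℝ := fun x => ∑ y, p x y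
    let pY : Y → ℝ := fun y => ∑ x, p x y
    let T : ℝ := (1 / 2) * ∑ x, ∑ y, |p x y - pX x * pY y|
    let I : ℝ := ∑ x, ∑ y, p x y * Real.log (p x y / (pX x * pY y))
    2 * T ^ 2 ≤ I ∧
      I ≤ Real.log ((min (Fintype.card X) (Fintype.card Y) - 1 : ℕ) : ℝ) * T +
            (negMulLog T + negMulLog (1 - T)) := by
  intro pX pY T I
  have hsumY : ∑ y, ∑ x, p x y = 1 := by rw [Finset.sum_comm]; exact hsum
  constructor
  · -- Pinsker lower bound
    have h := pinsker_lower (ι := X × Y) (fun i => p i.1 i.2)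
      (fun i => (∑ y', p i.1 y') * (∑ x', p x' i.2))
      (fun i => hp i.1 i.2)
      (fun i => mul_nonneg (Finset.sum_nonneg (fun y _ => hp i.1 y))
        (Finset.sum_nonneg (fun x _ => hp x i.2)))
      (fun i hne => by
        have hpos : 0 < p i.1 i.2 := (hp i.1 i.2).lt_of_ne (Ne.symm hne)
        have h1 : 0 < ∑ y', p i.1 y' :=
          lt_of_lt_of_le hpos (Finset.single_le_sum (fun y _ => hp i.1 y) (Finset.mem_univ i.2))
        have h2 : 0 < ∑ x', p x' i.2 :=
          lt_of_lt_of_le hpos (Finset.single_le_sum (fun x _ => hp x i.2) (Finset.mem_univ i.1))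
        exact (mul_pos h1 h2).ne')
      (by rw [Fintype.sum_prod_type]; exact hsum)
      (by
        rw [Fintype.sum_prod_type]
        have : ∀ x : X, ∑ y : Y, (∑ y', p x y') * (∑ x', p x' y)
            = (∑ y', p x y') * ∑ y, (∑ x', p x' y) := fun x => by rw [Finset.mul_sum]
        rw [Finset.sum_congr rfl (fun x _ => this x), ← Finset.sum_mul, hsum, hsumY, one_mul])
    rw [Fintype.sum_prod_type, Fintype.sum_prod_type] at h
    exact h
  · -- upper bound
    rcases le_total (Fintype.card X) (Fintype.card Y) with hc | hc
    · have h := upper_asym p hp hsum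
      rw [min_eq_left hc]
      exact h
    · have h := upper_asym (fun y x => p x y) (fun y x => hp x y) hsumY
      rw [min_eq_right hc]
      have eI : ∑ y, ∑ x, p x y * Real.log (p x y / ((∑ x', p x' y) * (∑ y', p x y'))) = I := by
        rw [Finset.sum_comm]
        exact Finset.sum_congr rfl (fun x _ => Finset.sum_congr rfl (fun y _ => by
          rw [mul_comm (∑ x', p x' y) (∑ y', p x y')]))
      have eT : (1/2 : ℝ) * ∑ y, ∑ x, |p x y - (∑ x', p x' y) * (∑ y', p x y')| = T := by
        have : ∑ y, ∑ x, |p x y - (∑ x', p x' y) * (∑ y', p x y')|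
            = ∑ x, ∑ y, |p x y - (∑ y', p x y') * (∑ x', p x' y)| := by
          rw [Finset.sum_comm]
          exact Finset.sum_congr rfl (fun x _ => Finset.sum_congr rfl (fun y _ => by
            rw [mul_comm (∑ x', p x' y) (∑ y', p x y')]))
        rw [this]
      rw [eI, eT] at h
      exact h
end
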